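/- arXiv:1306.2108 — 5 statements merged into one kernel-verified Lean document; each statement's English description precedes it below -/
import Mathlib

section
/- For every complex number s with Re(s) > 2, the Mellin transform ∫₀^∞ ( −∑_{n≥1} φ(n) · log(1 − e^{−tn}) ) · t^{s−1} dt equals ζ(s+1) · ζ(s−1) · Γ(s) / ζ(s), where ζ is the Riemann zeta function and Γ the Gamma function. -/
open MeasureTheory Complex

open LSeries in
open scoped LSeries.notation in
private lemma totient_LSummable {s : ℂ} (hs : 2 < s.re) :
    LSeriesSummable (fun n ↦ (Nat.totient n : ℂ)) s := by
  refine LSeriesSummable_of_le_const_mul_rpow (x := 2) hs ⟨1, fun n hn ↦ ?_⟩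
  rw [one_mul]
  norm_num
  exact Nat.totient_le n

open LSeries in
open scoped LSeries.notation in
private lemma LSeries_nat_eq {s : ℂ} (hs : 2 < s.re) :
    LSeries (fun n ↦ (n : ℂ)) s = riemannZeta (s - 1) := by
  have h1 : 1 < (s - 1).re := by simp [Complex.sub_re]; linarith
  rw [← LSeries_one_eq_riemannZeta h1]
  unfold LSeries
  refine tsum_congr fun n ↦ ?_
  rcases eq_or_ne n 0 with rfl | hn
  · simp [LSeries.term]
  · rw [LSeries.term_of_ne_zero hn, LSeries.term_of_ne_zero hn, Pi.one_apply,
      cpow_sub _ _ (Nat.cast_ne_zero.mpr hn), cpow_one]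
    have hns : ((n : ℂ)) ^ s ≠ 0 := by
      simp [Complex.cpow_eq_zero_iff, hn]
    field_simp

open LSeries in
open scoped LSeries.notation in
private lemma totient_conv :
    (fun n ↦ (Nat.totient n : ℂ)) ⍟ (1 : ℕ → ℂ) = fun n : ℕ ↦ (n : ℂ) := by
  rw [LSeries.convolution_def]
  ext n
  simp only [Pi.one_apply, mul_one]
  rw [Nat.sum_divisorsAntidiagonal (fun x _ ↦ (Nat.totient x : ℂ))]
  rw [← Nat.cast_sum]
  exact_mod_cast congrArg (Nat.cast (R := ℂ)) (Nat.sum_totient n)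

open LSeries in
open scoped LSeries.notation in
private lemma LSeries_totient_eq {s : ℂ} (hs : 2 < s.re) :
    LSeries (fun n ↦ (Nat.totient n : ℂ)) s = riemannZeta (s - 1) / riemannZeta s := by
  have hs1 : 1 < s.re := by linarith
  have hz : riemannZeta s ≠ 0 := riemannZeta_ne_zero_of_one_lt_re hs1
  have hc := LSeries_convolution' (totient_LSummable hs) (LSeriesSummable_one_iff.mpr hs1)
  rw [totient_conv, LSeries_nat_eq hs, LSeries_one_eq_riemannZeta hs1] at hc
  field_simp [← hc]
  exact hc.symm

/-- `∑ φ(n+1)/(n+1)^s = ζ(s-1)/ζ(s)` for `Re s > 2`. -/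
private lemma hasSum_totient_succ {s : ℂ} (hs : 2 < s.re) :
    HasSum (fun n : ℕ ↦ (Nat.totient (n + 1) : ℂ) / ((n + 1 : ℕ) : ℂ) ^ s)
      (riemannZeta (s - 1) / riemannZeta s) := by
  have h : HasSum (fun n ↦ LSeries.term (fun n ↦ (Nat.totient n : ℂ)) s n)
      (riemannZeta (s - 1) / riemannZeta s) := by
    have := (totient_LSummable hs).hasSum
    rwa [show ∑' n, LSeries.term (fun n ↦ (Nat.totient n : ℂ)) s n
        = LSeries (fun n ↦ (Nat.totient n : ℂ)) s from rfl, LSeries_totient_eq hs] at this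
  have h2 := (hasSum_nat_add_iff' (f := fun n ↦ LSeries.term (fun n ↦ (Nat.totient n : ℂ)) s n)
      1).mpr h
  simp only [Finset.range_one, Finset.sum_singleton, LSeries.term_zero, sub_zero] at h2
  refine h2.congr_fun fun n ↦ ?_
  rw [LSeries.term_of_ne_zero (Nat.succ_ne_zero n)]

/-- `∑ 1/(k+1)^(s+1) = ζ(s+1)`. -/
private lemma hasSum_zeta_succ {s : ℂ} (hs : 2 < s.re) :
    HasSum (fun k : ℕ ↦ (1 : ℂ) / ((k + 1 : ℕ) : ℂ) ^ (s + 1)) (riemannZeta (s + 1)) := by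
  have hs1 : 1 < (s + 1).re := by simp [Complex.add_re]; linarith
  have h : HasSum (fun n ↦ LSeries.term 1 (s + 1) n) (riemannZeta (s + 1)) :=
    LSeriesHasSum_one hs1
  have h2 := (hasSum_nat_add_iff' (f := fun n ↦ LSeries.term 1 (s + 1) n) 1).mpr h
  simp only [Finset.range_one, Finset.sum_singleton, LSeries.term_zero, sub_zero] at h2
  refine h2.congr_fun fun n ↦ ?_
  rw [LSeries.term_of_ne_zero (Nat.succ_ne_zero n), Pi.one_apply]

private lemma neg_log_one_sub_le {x : ℝ} (h1 : x < 1) :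
    -Real.log (1 - x) ≤ x / (1 - x) := by
  have hpos : 0 < 1 - x := by linarith
  have h := Real.log_le_sub_one_of_pos (inv_pos.mpr hpos)
  rw [Real.log_inv] at h
  have he : (1 - x)⁻¹ - 1 = x / (1 - x) := by field_simp; ring
  linarith [he ▸ h]

private lemma exp_eq_pow (t : ℝ) (n : ℕ) :
    Real.exp (-(t * ((n : ℝ) + 1))) = Real.exp (-t) ^ (n + 1) := by
  rw [← Real.exp_nat_mul]
  congr 1
  push_cast
  ring

/-- Summing the log series in each fiber. -/
private lemma hasSum_fiber {t : ℝ} (ht : 0 < t) (n : ℕ) :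
    HasSum (fun k : ℕ ↦ ((Nat.totient (n + 1) : ℝ) / ((k : ℝ) + 1)) *
        Real.exp (-(((n : ℝ) + 1) * ((k : ℝ) + 1)) * t))
      ((Nat.totient (n + 1) : ℝ) * -Real.log (1 - Real.exp (-(t * ((n : ℝ) + 1))))) := by
  have hx1 : Real.exp (-(t * ((n : ℝ) + 1))) < 1 := by
    have h0 : 0 < t * ((n : ℝ) + 1) := by positivity
    exact Real.exp_lt_one_iff.mpr (by linarith)
  have h := (Real.hasSum_pow_div_log_of_abs_lt_one
    (x := Real.exp (-(t * ((n : ℝ) + 1))))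
    (by rw [abs_of_pos (Real.exp_pos _)]; exact hx1)).mul_left (Nat.totient (n + 1) : ℝ)
  refine h.congr_fun fun k ↦ ?_
  rw [← Real.exp_nat_mul]
  rw [show ((k + 1 : ℕ) : ℝ) * -(t * ((n : ℝ) + 1))
      = -(((n : ℝ) + 1) * ((k : ℝ) + 1)) * t by push_cast; ring]
  have hk : ((k : ℝ) + 1) ≠ 0 := by positivity
  rw [show ((k : ℕ) + 1 : ℝ) = (k : ℝ) + 1 by push_cast; ring]
  field_simp
  try ring

/-- The double series is summable. -/
private lemma summable_G {t : ℝ} (ht : 0 < t) :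
    Summable (fun q : ℕ × ℕ ↦ ((Nat.totient (q.1 + 1) : ℝ) / ((q.2 : ℝ) + 1)) *
      Real.exp (-(((q.1 : ℝ) + 1) * ((q.2 : ℝ) + 1)) * t)) := by
  have hGnn : ∀ q : ℕ × ℕ, 0 ≤ ((Nat.totient (q.1 + 1) : ℝ) / ((q.2 : ℝ) + 1)) *
      Real.exp (-(((q.1 : ℝ) + 1) * ((q.2 : ℝ) + 1)) * t) := fun q ↦ by positivity
  rw [summable_prod_of_nonneg hGnn]
  refine ⟨fun n ↦ (hasSum_fiber ht n).summable, ?_⟩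
  have hr1 : Real.exp (-t) < 1 := Real.exp_lt_one_iff.mpr (by linarith)
  have hr0 : 0 < Real.exp (-t) := Real.exp_pos _
  have hbig : Summable (fun n : ℕ ↦
      (((n : ℝ) + 1) * Real.exp (-t) ^ (n + 1)) / (1 - Real.exp (-t))) := by
    apply Summable.div_const
    have := summable_pow_mul_geometric_of_norm_lt_one (R := ℝ) 1
      (r := Real.exp (-t)) (by rwa [Real.norm_eq_abs, abs_of_pos hr0])
    have h2 := (summable_nat_add_iff 1).mpr this
    refine h2.congr fun n ↦ ?_
    push_cast
    ring
  refine Summable.of_nonneg_of_le (fun n ↦ ?_) (fun n ↦ ?_) hbig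
  · have hx1 : Real.exp (-(t * ((n : ℝ) + 1))) < 1 := by
      have h0 : 0 < t * ((n : ℝ) + 1) := by positivity
      exact Real.exp_lt_one_iff.mpr (by linarith)
    rw [(hasSum_fiber ht n).tsum_eq]
    have : 0 ≤ -Real.log (1 - Real.exp (-(t * ((n : ℝ) + 1)))) := by
      rw [neg_nonneg]
      apply Real.log_nonpos <;> nlinarith [Real.exp_pos (-(t * ((n : ℝ) + 1)))]
    positivity
  · rw [(hasSum_fiber ht n).tsum_eq]
    have hx0 : 0 < Real.exp (-(t * ((n : ℝ) + 1))) := Real.exp_pos _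
    have hx1 : Real.exp (-(t * ((n : ℝ) + 1))) < 1 := by
      have h0 : 0 < t * ((n : ℝ) + 1) := by positivity
      exact Real.exp_lt_one_iff.mpr (by linarith)
    have hle1 := neg_log_one_sub_le hx1
    have hxr := exp_eq_pow t n
    have hrpow1 : Real.exp (-t) ^ (n + 1) ≤ Real.exp (-t) :=
      (pow_le_pow_of_le_one hr0.le hr1.le (by omega)).trans_eq (pow_one _)
    have hle2 : Real.exp (-(t * ((n : ℝ) + 1))) / (1 - Real.exp (-(t * ((n : ℝ) + 1))))
        ≤ Real.exp (-t) ^ (n + 1) / (1 - Real.exp (-t)) := by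
      rw [hxr]
      gcongr <;> nlinarith
    have hlog0 : 0 ≤ -Real.log (1 - Real.exp (-(t * ((n : ℝ) + 1)))) := by
      rw [neg_nonneg]
      apply Real.log_nonpos <;> nlinarith
    have hφle : (Nat.totient (n + 1) : ℝ) ≤ (n : ℝ) + 1 := by
      exact_mod_cast Nat.totient_le (n + 1)
    calc (Nat.totient (n + 1) : ℝ) * -Real.log (1 - Real.exp (-(t * ((n : ℝ) + 1))))
        ≤ ((n : ℝ) + 1) * (Real.exp (-t) ^ (n + 1) / (1 - Real.exp (-t))) :=
          mul_le_mul hφle (hle1.trans hle2) hlog0 (by positivity)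
      _ = (((n : ℝ) + 1) * Real.exp (-t) ^ (n + 1)) / (1 - Real.exp (-t)) := by ring

/-- The total real sum. -/
private lemma hasSum_G {t : ℝ} (ht : 0 < t) :
    HasSum (fun q : ℕ × ℕ ↦ ((Nat.totient (q.1 + 1) : ℝ) / ((q.2 : ℝ) + 1)) *
        Real.exp (-(((q.1 : ℝ) + 1) * ((q.2 : ℝ) + 1)) * t))
      (-∑' n : ℕ, (Nat.totient (n + 1) : ℝ) *
        Real.log (1 - Real.exp (-(t * ((n : ℝ) + 1))))) := by
  have hGsum := summable_G ht
  have htsum : (∑' q : ℕ × ℕ, ((Nat.totient (q.1 + 1) : ℝ) / ((q.2 : ℝ) + 1)) *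
      Real.exp (-(((q.1 : ℝ) + 1) * ((q.2 : ℝ) + 1)) * t))
      = -∑' n : ℕ, (Nat.totient (n + 1) : ℝ) *
        Real.log (1 - Real.exp (-(t * ((n : ℝ) + 1)))) := by
    rw [Summable.tsum_prod hGsum, ← tsum_neg]
    refine tsum_congr fun n ↦ ?_
    rw [(hasSum_fiber ht n).tsum_eq]
    ring
  exact htsum ▸ hGsum.hasSum

set_option maxHeartbeats 1000000 in
/-- The Mellin transform of `t ↦ log S(e^{-t}) = -∑_{n≥1} φ(n) log(1 - e^{-tn})` equals
`ζ(s+1) ζ(s-1) Γ(s) / ζ(s)` for `Re(s) > 2`. -/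
theorem mellin_log_S (s : ℂ) (hs : 2 < s.re) :
    ∫ t in Set.Ioi (0 : ℝ),
        ((-∑' n : ℕ, (Nat.totient (n + 1) : ℝ) *
            Real.log (1 - Real.exp (-(t * (n + 1)))) : ℝ) : ℂ) * (t : ℂ) ^ (s - 1) =
      riemannZeta (s + 1) * riemannZeta (s - 1) * Complex.Gamma s / riemannZeta s := by
  have hs0 : 0 < s.re := by linarith
  -- the function and weights for `hasSum_mellin`
  have hF : ∀ t ∈ Set.Ioi (0 : ℝ),
      HasSum (fun q : ℕ × ℕ ↦
        (((Nat.totient (q.1 + 1) : ℝ) / ((q.2 : ℝ) + 1) : ℝ) : ℂ) *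
          Real.exp (-((((q.1 : ℝ) + 1) * ((q.2 : ℝ) + 1))) * t))
        (((-∑' n : ℕ, (Nat.totient (n + 1) : ℝ) *
            Real.log (1 - Real.exp (-(t * (n + 1)))) : ℝ) : ℂ)) := by
    intro t ht
    rw [Set.mem_Ioi] at ht
    have := Complex.ofRealCLM.hasSum (hasSum_G ht)
    refine this.congr_fun fun q ↦ ?_
    simp only [Complex.ofRealCLM_apply]
    push_cast
    ring
  have h_sum : Summable fun q : ℕ × ℕ ↦
      ‖(((Nat.totient (q.1 + 1) : ℝ) / ((q.2 : ℝ) + 1) : ℝ) : ℂ)‖ /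
        ((((q.1 : ℝ) + 1) * ((q.2 : ℝ) + 1))) ^ s.re := by
    have hσ2 : (2 : ℝ) < s.re := hs
    have hf : Summable (fun n : ℕ ↦ (Nat.totient (n + 1) : ℝ) / ((n : ℝ) + 1) ^ s.re) := by
      have hsum : Summable (fun n : ℕ ↦ ((n : ℝ) + 1) ^ (1 - s.re)) := by
        have := (Real.summable_nat_rpow (p := 1 - s.re)).mpr (by linarith)
        have h2 := (summable_nat_add_iff 1).mpr this
        refine h2.congr fun n ↦ ?_
        push_cast
        ring_nf
      refine Summable.of_nonneg_of_le (fun n ↦ by positivity) (fun n ↦ ?_) hsum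
      rw [Real.rpow_sub (by positivity), Real.rpow_one]
      gcongr
      exact_mod_cast Nat.totient_le (n + 1)
    have hg : Summable (fun k : ℕ ↦ (1 : ℝ) / (((k : ℝ) + 1) * ((k : ℝ) + 1) ^ s.re)) := by
      have hsum : Summable (fun k : ℕ ↦ ((k : ℝ) + 1) ^ (-s.re)) := by
        have := (Real.summable_nat_rpow (p := -s.re)).mpr (by linarith)
        have h2 := (summable_nat_add_iff 1).mpr this
        refine h2.congr fun n ↦ ?_
        push_cast
        ring_nf
      refine Summable.of_nonneg_of_le (fun k ↦ by positivity) (fun k ↦ ?_) hsum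
      rw [Real.rpow_neg (by positivity), ← one_div]
      have hkk : (0:ℝ) < ((k : ℝ) + 1) ^ s.re := by positivity
      have : ((k : ℝ) + 1) ^ s.re ≤ ((k : ℝ) + 1) * ((k : ℝ) + 1) ^ s.re :=
        le_mul_of_one_le_left hkk.le (by linarith [Nat.cast_nonneg (α := ℝ) k])
      gcongr
    have := hf.mul_of_nonneg hg (fun n ↦ by positivity) (fun k ↦ by positivity)
    refine this.congr fun q ↦ ?_
    have habs : ‖(((Nat.totient (q.1 + 1) : ℝ) / ((q.2 : ℝ) + 1) : ℝ) : ℂ)‖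
        = (Nat.totient (q.1 + 1) : ℝ) / ((q.2 : ℝ) + 1) := by
      rw [Complex.norm_real, Real.norm_eq_abs]
      exact abs_of_nonneg (by positivity)
    rw [habs, Real.mul_rpow (by positivity) (by positivity)]
    have h1 : (0:ℝ) < ((q.1 : ℝ) + 1) ^ s.re := by positivity
    have h2 : (0:ℝ) < ((q.2 : ℝ) + 1) ^ s.re := by positivity
    have h3 : (0:ℝ) < (q.2 : ℝ) + 1 := by positivity
    field_simp
  have H := hasSum_mellin (F := fun t ↦ ((-∑' n : ℕ, (Nat.totient (n + 1) : ℝ) *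
      Real.log (1 - Real.exp (-(t * (n + 1)))) : ℝ) : ℂ))
    (a := fun q : ℕ × ℕ ↦ (((Nat.totient (q.1 + 1) : ℝ) / ((q.2 : ℝ) + 1) : ℝ) : ℂ))
    (p := fun q : ℕ × ℕ ↦ (((q.1 : ℝ) + 1) * ((q.2 : ℝ) + 1)))
    (fun q ↦ Or.inr (by positivity)) hs0 hF h_sum
  -- rewrite each term as a product
  have Hterm : ∀ q : ℕ × ℕ, Complex.Gamma s *
      (((Nat.totient (q.1 + 1) : ℝ) / ((q.2 : ℝ) + 1) : ℝ) : ℂ) /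
        ((((((q.1 : ℝ) + 1) * ((q.2 : ℝ) + 1)) : ℝ) : ℂ)) ^ s =
      (Complex.Gamma s * ((Nat.totient (q.1 + 1) : ℂ) / ((q.1 + 1 : ℕ) : ℂ) ^ s)) *
        ((1 : ℂ) / ((q.2 + 1 : ℕ) : ℂ) ^ (s + 1)) := by
    rintro ⟨n, k⟩
    have hn0 : ((n : ℂ) + 1) ≠ 0 := by
      exact_mod_cast Nat.cast_add_one_ne_zero (R := ℂ) n
    have hk0 : ((k : ℂ) + 1) ≠ 0 := by
      exact_mod_cast Nat.cast_add_one_ne_zero (R := ℂ) k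
    have hns : ((n : ℂ) + 1) ^ s ≠ 0 := by
      simp [Complex.cpow_eq_zero_iff, hn0]
    have hks : ((k : ℂ) + 1) ^ s ≠ 0 := by
      simp [Complex.cpow_eq_zero_iff, hk0]
    simp only
    rw [Complex.ofReal_mul, mul_cpow_ofReal_nonneg (by positivity) (by positivity)]
    push_cast
    rw [Complex.cpow_add _ _ hk0, Complex.cpow_one]
    field_simp
    try ring
    try exact Or.inl trivial
  rw [funext Hterm] at H
  -- combine with the Dirichlet series values
  have h1 := (hasSum_totient_succ hs).mul_left (Complex.Gamma s)
  have h2 := hasSum_zeta_succ hs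
  have hval := (h1.mul_eq h2 H).symm
  calc ∫ t in Set.Ioi (0 : ℝ),
        ((-∑' n : ℕ, (Nat.totient (n + 1) : ℝ) *
            Real.log (1 - Real.exp (-(t * (n + 1)))) : ℝ) : ℂ) * (t : ℂ) ^ (s - 1)
      = mellin (fun t ↦ ((-∑' n : ℕ, (Nat.totient (n + 1) : ℝ) *
            Real.log (1 - Real.exp (-(t * (n + 1)))) : ℝ) : ℂ)) s := by
        rw [mellin]
        exact setIntegral_congr_fun measurableSet_Ioi fun t ht ↦ by
          rw [smul_eq_mul, mul_comm]
    _ = Complex.Gamma s * (riemannZeta (s - 1) / riemannZeta s) * riemannZeta (s + 1) :=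
        hval
    _ = riemannZeta (s + 1) * riemannZeta (s - 1) * Complex.Gamma s / riemannZeta s := by
        ring
end

section
/- Let p(n) be the number of NW-convex paths of size n, and let H(n) = ∑_m ∑_{(a,b)∈m} a, where the outer sum is over all multisets m of coprime pairs of total weight n counted by p(n) and the inner sum counts each pair with its multiplicity. Then H(n)/(n·p(n)) → 1/2 as n → ∞; that is, the average position of the ending point of a uniformly random NW-convex path of size n is asymptotically (n/2, n/2). -/
open Real Filter

/-- The number of NW-convex paths of size `n`: multisets of pairs `(a, b)` of natural numbers
with `b ≥ 1` and `gcd a b = 1`, whose total weight `∑ (a + b)` equals `n`. -/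
noncomputable def pNW (n : ℕ) : ℕ :=
  Nat.card {m : Multiset (ℕ × ℕ) //
    (∀ ab ∈ m, 1 ≤ ab.2 ∧ Nat.gcd ab.1 ab.2 = 1) ∧
    (m.map fun ab => ab.1 + ab.2).sum = n}

/-- `H(n)`: the total horizontal displacement, summed over all NW-convex paths of size `n`,
i.e. the sum over all multisets counted by `pNW n` of the sum (with multiplicity) of the
first coordinates of their pairs. -/
noncomputable def HNW (n : ℕ) : ℝ :=
  ∑' m : {m : Multiset (ℕ × ℕ) //
      (∀ ab ∈ m, 1 ≤ ab.2 ∧ Nat.gcd ab.1 ab.2 = 1) ∧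
      (m.map fun ab => ab.1 + ab.2).sum = n},
    ((m.1.map fun ab => ab.1).sum : ℝ)

namespace AvgEnd

open scoped Classical

def wt (ab : ℕ × ℕ) : ℕ := ab.1 + ab.2

def Ok (m : Multiset (ℕ × ℕ)) : Prop := ∀ ab ∈ m, 1 ≤ ab.2 ∧ Nat.gcd ab.1 ab.2 = 1

def big (n : ℕ) : Multiset (ℕ × ℕ) := n • (Finset.range (n+1) ×ˢ Finset.range (n+1)).val

noncomputable def S (n : ℕ) : Finset (Multiset (ℕ × ℕ)) :=
  ((big n).powerset.toFinset).filter (fun m => Ok m ∧ (m.map wt).sum = n)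

lemma card_le_of_ok {m : Multiset (ℕ × ℕ)} (hok : Ok m) :
    Multiset.card m ≤ (m.map wt).sum := by
  have : Multiset.card m = (m.map (fun _ => 1)).sum := by
    simp [Multiset.map_const', Multiset.sum_replicate]
  rw [this]
  exact Multiset.sum_map_le_sum_map _ _ (fun ab hab => by
    have := (hok ab hab).1; unfold wt; omega)

lemma mem_S {n : ℕ} {m : Multiset (ℕ × ℕ)} :
    m ∈ S n ↔ Ok m ∧ (m.map wt).sum = n := by
  constructor
  · intro h; exact (Finset.mem_filter.1 h).2
  · rintro ⟨hok, hsum⟩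
    refine Finset.mem_filter.2 ⟨?_, hok, hsum⟩
    rw [Multiset.mem_toFinset, Multiset.mem_powerset]
    rw [Multiset.le_iff_count]
    intro x
    by_cases hx : x ∈ m
    · have hwtx : wt x ≤ n := by
        rw [← hsum]
        exact Multiset.single_le_sum (fun y _ => Nat.zero_le y) _
          (Multiset.mem_map_of_mem wt hx)
      have hx2 := (hok x hx).1
      have hx1 : x.1 ≤ n := by unfold wt at hwtx; omega
      have hx2n : x.2 ≤ n := by unfold wt at hwtx; omega
      have hxmem : x ∈ (Finset.range (n+1) ×ˢ Finset.range (n+1)).val := by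
        rw [Finset.mem_val, Finset.mem_product, Finset.mem_range, Finset.mem_range]
        omega
      have hcount1 : (Finset.range (n+1) ×ˢ Finset.range (n+1)).val.count x = 1 :=
        Multiset.count_eq_one_of_mem (Finset.range (n+1) ×ˢ Finset.range (n+1)).nodup hxmem
      have : Multiset.count x m ≤ n := by
        calc Multiset.count x m ≤ Multiset.card m := Multiset.count_le_card x m
        _ ≤ (m.map wt).sum := card_le_of_ok hok
        _ = n := hsum
      rw [big, Multiset.count_nsmul, hcount1, mul_one]
      exact this
    · simp [Multiset.count_eq_zero_of_notMem hx]

noncomputable def p (n : ℕ) : ℕ := (S n).card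
noncomputable def Hn (n : ℕ) : ℕ := ∑ m ∈ S n, (m.map Prod.fst).sum
noncomputable def Kn (n : ℕ) : ℕ := ∑ m ∈ S n, m.count ((0:ℕ),(1:ℕ))

lemma replicate_mem (n : ℕ) : Multiset.replicate n ((0:ℕ),(1:ℕ)) ∈ S n := by
  rw [mem_S]
  refine ⟨fun ab hab => ?_, ?_⟩
  · rw [Multiset.eq_of_mem_replicate hab]; simp
  · simp [Multiset.map_replicate, Multiset.sum_replicate, wt]

lemma p_pos (n : ℕ) : 0 < p n := Finset.card_pos.2 ⟨_, replicate_mem n⟩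

lemma p_mono {i n : ℕ} (h : i ≤ n) : p i ≤ p n := by
  apply Finset.card_le_card_of_injOn (fun m => m + Multiset.replicate (n - i) ((0:ℕ),(1:ℕ)))
  · intro m hm; rw [Finset.mem_coe, mem_S] at hm ⊢; obtain ⟨hok, hsum⟩ := hm
    constructor
    · intro ab hab
      rcases Multiset.mem_add.1 hab with h1 | h2
      · exact hok ab h1
      · rw [Multiset.eq_of_mem_replicate h2]; simp
    · rw [Multiset.map_add, Multiset.sum_add, hsum, Multiset.map_replicate,
        Multiset.sum_replicate]
      simp only [wt, smul_eq_mul]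
      omega
  · intro a _ b _ hab
    exact add_right_cancel hab

lemma count_le {n : ℕ} {m : Multiset (ℕ × ℕ)} (hm : m ∈ S n) :
    m.count ((0:ℕ),(1:ℕ)) ≤ n := by
  rw [mem_S] at hm
  calc m.count ((0:ℕ),(1:ℕ)) ≤ Multiset.card m := Multiset.count_le_card _ m
  _ ≤ (m.map wt).sum := card_le_of_ok hm.1
  _ = n := hm.2
def swp (ab : ℕ × ℕ) : ℕ × ℕ := if ab.1 = 0 then ab else (ab.2, ab.1)

lemma wt_swp (ab : ℕ × ℕ) : wt (swp ab) = wt ab := by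
  unfold swp wt
  split_ifs with h
  · rfl
  · simp [Nat.add_comm]

lemma swp_swp {ab : ℕ × ℕ} (h : 1 ≤ ab.2) : swp (swp ab) = ab := by
  obtain ⟨a, b⟩ := ab
  simp only at h
  by_cases h1 : a = 0
  · simp [swp, h1]
  · have hb : b ≠ 0 := by omega
    simp [swp, h1, hb]

lemma swp_mem_S {n : ℕ} {m : Multiset (ℕ × ℕ)} (hm : m ∈ S n) : m.map swp ∈ S n := by
  rw [mem_S] at hm ⊢
  obtain ⟨hok, hsum⟩ := hm
  constructor
  · intro ab hab
    rw [Multiset.mem_map] at hab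
    obtain ⟨cd, hcd, rfl⟩ := hab
    obtain ⟨h1, h2⟩ := hok cd hcd
    unfold swp
    split_ifs with h
    · exact ⟨h1, h2⟩
    · exact ⟨Nat.one_le_iff_ne_zero.2 h, by simpa [Nat.gcd_comm] using h2⟩
  · rw [Multiset.map_map]
    rw [show ((wt ∘ swp) : ℕ × ℕ → ℕ) = wt from funext wt_swp]
    exact hsum

lemma map_swp_swp {m : Multiset (ℕ × ℕ)} (hok : Ok m) : (m.map swp).map swp = m := by
  rw [Multiset.map_map]
  calc m.map (swp ∘ swp) = m.map id := Multiset.map_congr rfl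
        (fun x hx => swp_swp (hok x hx).1)
  _ = m := Multiset.map_id m

lemma ptwise {ab : ℕ × ℕ} (h1 : 1 ≤ ab.2) (h2 : Nat.gcd ab.1 ab.2 = 1) :
    ab.1 + (swp ab).1 + (if ab = ((0:ℕ),(1:ℕ)) then 1 else 0) = wt ab := by
  obtain ⟨a, b⟩ := ab
  simp only at h1 h2
  unfold swp wt
  by_cases ha : a = 0
  · subst ha
    simp only [Nat.gcd_zero_left] at h2
    subst h2
    simp
  · have hne : ¬ ((a,b) = ((0:ℕ),(1:ℕ))) := by simp [ha]
    simp [ha, hne]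
    try omega

lemma count_eq_sum (m : Multiset (ℕ × ℕ)) :
    m.count ((0:ℕ),(1:ℕ))
      = (m.map (fun ab => if ab = ((0:ℕ),(1:ℕ)) then 1 else 0)).sum := by
  induction m using Multiset.induction_on with
  | empty => simp
  | cons a s ih =>
    simp only [Multiset.count_cons, Multiset.map_cons, Multiset.sum_cons, ih]
    by_cases h : a = ((0:ℕ),(1:ℕ)) <;> simp [h, eq_comm] <;> omega

lemma per_m {n : ℕ} {m : Multiset (ℕ × ℕ)} (hm : m ∈ S n) :
    (m.map Prod.fst).sum + ((m.map swp).map Prod.fst).sum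
      + m.count ((0:ℕ),(1:ℕ)) = n := by
  rw [mem_S] at hm
  obtain ⟨hok, hsum⟩ := hm
  rw [← hsum, count_eq_sum, Multiset.map_map, ← Multiset.sum_map_add,
    ← Multiset.sum_map_add]
  congr 1
  refine Multiset.map_congr rfl (fun x hx => ?_)
  obtain ⟨h1, h2⟩ := hok x hx
  exact ptwise h1 h2

lemma sum_swp (n : ℕ) :
    ∑ m ∈ S n, ((m.map swp).map Prod.fst).sum = Hn n := by
  unfold Hn
  refine Finset.sum_nbij' (i := fun m => m.map swp) (j := fun m => m.map swp)
    (fun m hm => swp_mem_S hm) (fun m hm => swp_mem_S hm)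
    (fun m hm => map_swp_swp (mem_S.1 hm).1) (fun m hm => map_swp_swp (mem_S.1 hm).1)
    (fun m hm => rfl)

lemma step1 (n : ℕ) : 2 * Hn n + Kn n = n * p n := by
  have h1 : ∑ m ∈ S n, ((m.map Prod.fst).sum
      + ((m.map swp).map Prod.fst).sum + m.count ((0:ℕ),(1:ℕ)))
      = ∑ m ∈ S n, n := Finset.sum_congr rfl (fun m hm => per_m hm)
  rw [Finset.sum_const, smul_eq_mul, Finset.sum_add_distrib, Finset.sum_add_distrib,
    sum_swp] at h1
  simp only [Hn, Kn, p] at h1 ⊢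
  rw [mul_comm] at h1
  omega
lemma filter_card_le {n j : ℕ} (hj1 : 1 ≤ j) (hjn : j ≤ n) :
    ((S n).filter (fun m => j ≤ m.count ((0:ℕ),(1:ℕ)))).card ≤ p (n - j) := by
  apply Finset.card_le_card_of_injOn
    (fun m => m - Multiset.replicate j ((0:ℕ),(1:ℕ)))
  · intro m hm
    rw [Finset.mem_coe, Finset.mem_filter] at hm
    obtain ⟨hmS, hcnt⟩ := hm
    have hle : Multiset.replicate j ((0:ℕ),(1:ℕ)) ≤ m :=
      Multiset.le_count_iff_replicate_le.1 hcnt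
    have hrec : (m - Multiset.replicate j ((0:ℕ),(1:ℕ)))
        + Multiset.replicate j ((0:ℕ),(1:ℕ)) = m := tsub_add_cancel_of_le hle
    rw [mem_S] at hmS
    rw [Finset.mem_coe, mem_S]
    obtain ⟨hok, hsum⟩ := hmS
    constructor
    · intro ab hab
      exact hok ab (Multiset.mem_of_le (tsub_le_self) hab)
    · have := congrArg (fun t => (t.map wt).sum) hrec
      simp only [Multiset.map_add, Multiset.sum_add, Multiset.map_replicate,
        Multiset.sum_replicate, smul_eq_mul] at this
      rw [hsum] at this
      have hwt : wt ((0:ℕ),(1:ℕ)) = 1 := rfl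
      rw [hwt] at this
      beta_reduce
      omega
  · intro a ha b hb hab
    rw [Finset.mem_coe, Finset.mem_filter] at ha hb
    have ha' : Multiset.replicate j ((0:ℕ),(1:ℕ)) ≤ a :=
      Multiset.le_count_iff_replicate_le.1 ha.2
    have hb' : Multiset.replicate j ((0:ℕ),(1:ℕ)) ≤ b :=
      Multiset.le_count_iff_replicate_le.1 hb.2
    have := congrArg (fun t => t + Multiset.replicate j ((0:ℕ),(1:ℕ))) hab
    simpa [tsub_add_cancel_of_le ha', tsub_add_cancel_of_le hb'] using this

lemma step2 (n : ℕ) : Kn n ≤ ∑ j ∈ Finset.Icc 1 n, p (n - j) := by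
  have hcount : ∀ m ∈ S n, m.count ((0:ℕ),(1:ℕ))
      = ∑ j ∈ Finset.Icc 1 n, (if j ≤ m.count ((0:ℕ),(1:ℕ)) then 1 else 0) := by
    intro m hm
    have hc := count_le hm
    rw [← Finset.sum_filter]
    have : (Finset.Icc 1 n).filter (fun j => j ≤ m.count ((0:ℕ),(1:ℕ)))
        = Finset.Icc 1 (m.count ((0:ℕ),(1:ℕ))) := by
      ext j
      simp only [Finset.mem_filter, Finset.mem_Icc]
      omega
    rw [this]
    simp [Nat.card_Icc]
  have h1 : Kn n = ∑ j ∈ Finset.Icc 1 n, ∑ m ∈ S n,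
      (if j ≤ m.count ((0:ℕ),(1:ℕ)) then 1 else 0) := by
    unfold Kn
    rw [← Finset.sum_comm]
    exact Finset.sum_congr rfl hcount
  rw [h1]
  apply Finset.sum_le_sum
  intro j hj
  rw [Finset.mem_Icc] at hj
  have : ∑ m ∈ S n, (if j ≤ m.count ((0:ℕ),(1:ℕ)) then 1 else 0)
      = ((S n).filter (fun m => j ≤ m.count ((0:ℕ),(1:ℕ)))).card := by
    rw [← Finset.sum_filter]
    simp
  rw [this]
  exact filter_card_le hj.1 hj.2
lemma key_sum (A : Finset ℕ) : ∑ j ∈ Finset.range A.card, j ≤ ∑ a ∈ A, a := by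
  induction A using Finset.strongInduction with
  | _ A ih =>
    rcases A.eq_empty_or_nonempty with rfl | hne
    · simp
    · set M := A.max' hne with hM
      have hMA : M ∈ A := A.max'_mem hne
      have hIH := ih (A.erase M) (Finset.erase_ssubset hMA)
      have hcard : (A.erase M).card = A.card - 1 := Finset.card_erase_of_mem hMA
      have hk : 1 ≤ A.card := Finset.card_pos.2 hne
      have hMge : A.card - 1 ≤ M := by
        have hsub : A ⊆ Finset.range (M + 1) := fun a ha =>
          Finset.mem_range.2 (Nat.lt_succ_of_le (A.le_max' a ha))
        have := Finset.card_le_card hsub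
        rw [Finset.card_range] at this
        omega
      have hsplit : ∑ a ∈ A, a = M + ∑ a ∈ A.erase M, a :=
        (Finset.add_sum_erase A id hMA).symm
      have hr : ∑ j ∈ Finset.range A.card, j
          = (∑ j ∈ Finset.range (A.card - 1), j) + (A.card - 1) := by
        conv_lhs => rw [show A.card = (A.card - 1) + 1 by omega]
        rw [Finset.sum_range_succ]
      rw [hsplit, hr]
      rw [hcard] at hIH
      omega

lemma card_le_sqrt {n : ℕ} {A : Finset ℕ} (h : ∑ a ∈ A, (a + 1) ≤ n) :
    A.card ≤ Nat.sqrt (2 * n) := by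
  rw [Nat.le_sqrt]
  have h1 : ∑ a ∈ A, (a + 1) = (∑ a ∈ A, a) + A.card := by
    rw [Finset.sum_add_distrib, Finset.sum_const, smul_eq_mul, mul_one]
  have h2 := key_sum A
  have h3 : (∑ j ∈ Finset.range A.card, j) * 2 = A.card * (A.card - 1) :=
    Finset.sum_range_id_mul_two A.card
  have h4 : A.card * (A.card - 1) + 2 * A.card ≤ 2 * n := by omega
  rcases Nat.eq_zero_or_pos A.card with h | h
  · simp [h]
  · have e1 : A.card - 1 + 1 = A.card := by omega
    have h5 : A.card * (A.card - 1) + A.card = A.card * A.card := by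
      rw [← Nat.mul_succ, Nat.succ_eq_add_one, e1]
    omega

def dd (j a : ℕ) : Multiset (ℕ × ℕ) := {(a, 1), (j - 2 - a, 1)}

lemma step3 {n j : ℕ} (h2 : 2 ≤ j) (hn : j ≤ n) :
    j * p (n - j) ≤ 3 * Nat.sqrt (2 * n) * p n := by
  classical
  set s : Finset (ℕ × Multiset (ℕ × ℕ)) := (Finset.range (j / 2)) ×ˢ S (n - j) with hs
  set f : ℕ × Multiset (ℕ × ℕ) → Multiset (ℕ × ℕ) := fun x => x.2 + dd j x.1 with hf
  -- every image lands in S n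
  have hmaps : ∀ x ∈ s, f x ∈ S n := by
    rintro ⟨a, m⟩ hx
    rw [hs, Finset.mem_product, Finset.mem_range] at hx
    obtain ⟨ha, hmm⟩ := hx
    rw [mem_S] at hmm ⊢
    obtain ⟨hok, hsum⟩ := hmm
    constructor
    · intro ab hab
      rcases Multiset.mem_add.1 hab with h | h
      · exact hok ab h
      · unfold dd at h
        rcases Multiset.mem_cons.1 h with h | h
        · rw [h]; exact ⟨le_refl 1, Nat.gcd_one_right a⟩
        · rw [Multiset.mem_singleton.1 h]
          exact ⟨le_refl 1, Nat.gcd_one_right _⟩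
    · rw [Multiset.map_add, Multiset.sum_add, hsum]
      unfold dd
      have ha2 : 2 * a ≤ j - 2 := by omega
      simp [wt]
      omega
  -- fibers have size at most sqrt (2n)
  have hfib : ∀ M ∈ S n, (s.filter (fun x => f x = M)).card ≤ Nat.sqrt (2 * n) := by
    intro M hM
    have hMsum : (M.map wt).sum = n := (mem_S.1 hM).2
    set A : Finset ℕ := (M.toFinset.filter (fun q => q.2 = 1)).image Prod.fst with hA
    have hsumA : ∑ a ∈ A, (a + 1) ≤ n := by
      rw [hA]
      rw [Finset.sum_image ?hi]
      case hi =>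
        intro q hq r hr hqr
        rw [Finset.mem_coe, Finset.mem_filter] at hq hr
        exact Prod.ext hqr (hq.2.trans hr.2.symm)
      calc ∑ q ∈ M.toFinset.filter (fun q => q.2 = 1), (q.1 + 1)
          = ∑ q ∈ M.toFinset.filter (fun q => q.2 = 1), wt q := by
            apply Finset.sum_congr rfl
            intro q hq
            rw [Finset.mem_filter] at hq
            unfold wt
            omega
        _ ≤ ∑ q ∈ M.toFinset, wt q := Finset.sum_le_sum_of_subset (Finset.filter_subset _ _)
        _ ≤ (M.map wt).sum := by
            rw [Finset.sum_multiset_map_count]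
            apply Finset.sum_le_sum
            intro q hq
            have : 1 ≤ M.count q := (Multiset.one_le_count_iff_mem).2 (Multiset.mem_toFinset.1 hq)
            calc wt q = 1 * wt q := (one_mul _).symm
            _ ≤ M.count q * wt q := Nat.mul_le_mul_right _ this
            _ = M.count q • wt q := by rw [smul_eq_mul]
        _ = n := hMsum
    have hcardA : A.card ≤ Nat.sqrt (2 * n) := card_le_sqrt hsumA
    refine le_trans (Finset.card_le_card_of_injOn (fun x => x.1) ?_ ?_) hcardA
    · rintro ⟨a, m⟩ hx
      rw [Finset.mem_coe, Finset.mem_filter] at hx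
      obtain ⟨hxs, hxf⟩ := hx
      rw [Finset.mem_coe, hA, Finset.mem_image]
      refine ⟨(a, 1), ?_, rfl⟩
      rw [Finset.mem_filter, Multiset.mem_toFinset]
      constructor
      · rw [← hxf, hf]
        apply Multiset.mem_add.2
        right
        unfold dd
        exact Multiset.mem_cons_self _ _
      · rfl
    · rintro ⟨a, m⟩ ha ⟨b, m'⟩ hb hab
      simp only at hab
      subst hab
      rw [Finset.mem_coe, Finset.mem_filter] at ha hb
      have e1 : m + dd j a = M := ha.2
      have e2 : m' + dd j a = M := hb.2
      rw [add_right_cancel (e1.trans e2.symm)]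
  have hcards : s.card = (j / 2) * p (n - j) := by
    rw [hs, Finset.card_product, Finset.card_range]
    rfl
  have hmain : s.card ≤ Nat.sqrt (2 * n) * p n := by
    calc s.card ≤ Nat.sqrt (2 * n) * (S n).card :=
      Finset.card_le_mul_card_image_of_maps_to hmaps _ hfib
    _ = Nat.sqrt (2 * n) * p n := rfl
  have hj3 : j ≤ 3 * (j / 2) := by omega
  calc j * p (n - j) ≤ (3 * (j / 2)) * p (n - j) := Nat.mul_le_mul_right _ hj3
  _ = 3 * ((j / 2) * p (n - j)) := by ring
  _ = 3 * s.card := by rw [hcards]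
  _ ≤ 3 * (Nat.sqrt (2 * n) * p n) := Nat.mul_le_mul_left _ hmain
  _ = 3 * Nat.sqrt (2 * n) * p n := by ring
-- casting Nat.sqrt to ℝ
lemma natSqrt_le_real (m : ℕ) : (Nat.sqrt m : ℝ) ≤ Real.sqrt m := by
  rw [Real.le_sqrt (Nat.cast_nonneg _) (Nat.cast_nonneg _)]
  have := Nat.sqrt_le' m
  calc (Nat.sqrt m : ℝ) ^ 2 = ((Nat.sqrt m * Nat.sqrt m : ℕ) : ℝ) := by push_cast; ring
  _ ≤ (m : ℝ) := by exact_mod_cast Nat.sqrt_le m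
  -- may need fix

lemma real_sub_one_le_natSqrt (m : ℕ) : Real.sqrt m - 1 ≤ (Nat.sqrt m : ℝ) := by
  have h : (m : ℝ) < ((Nat.sqrt m : ℝ) + 1) ^ 2 := by
    have := Nat.lt_succ_sqrt' m
    calc (m : ℝ) < (((Nat.sqrt m + 1) ^ 2 : ℕ) : ℝ) := by exact_mod_cast this
    _ = ((Nat.sqrt m : ℝ) + 1) ^ 2 := by push_cast; ring
  have h2 : Real.sqrt m < (Nat.sqrt m : ℝ) + 1 := by
    rw [Real.sqrt_lt' (by positivity)]
    exact h
  linarith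
lemma ratio_le {n : ℕ} (hn : 256 ≤ n) :
    (Kn n : ℝ) / ((n : ℝ) * (p n : ℝ)) ≤ 49 / Real.sqrt (Real.sqrt n) := by
  classical
  set T : ℕ := Nat.sqrt n * Nat.sqrt (Nat.sqrt n) with hT
  have h16 : 16 ≤ Nat.sqrt n := Nat.le_sqrt.2 (by omega)
  have h4 : 4 ≤ Nat.sqrt (Nat.sqrt n) := Nat.le_sqrt.2 (by omega)
  have hTn : T ≤ n := by
    calc T ≤ Nat.sqrt n * Nat.sqrt n :=
      Nat.mul_le_mul_left _ (Nat.sqrt_le_sqrt (Nat.sqrt_le_self n))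
    _ ≤ n := Nat.sqrt_le n
  have hT64 : 64 ≤ T := by
    calc (64:ℕ) = 16 * 4 := rfl
    _ ≤ T := Nat.mul_le_mul h16 h4
  -- ℕ inequality
  have hsplit : ∑ j ∈ Finset.Icc 1 n, p (n - j)
      = (∑ j ∈ Finset.Ioc 0 T, p (n - j)) + ∑ j ∈ Finset.Ioc T n, p (n - j) := by
    rw [show Finset.Icc 1 n = Finset.Ioc 0 n by ext; simp only [Finset.mem_Icc, Finset.mem_Ioc]; omega]
    exact (Finset.sum_Ioc_consecutive _ (Nat.zero_le T) hTn).symm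
  have h1 : ∑ j ∈ Finset.Ioc 0 T, p (n - j) ≤ T * p n := by
    calc ∑ j ∈ Finset.Ioc 0 T, p (n - j) ≤ ∑ _j ∈ Finset.Ioc 0 T, p n :=
      Finset.sum_le_sum (fun j _ => p_mono (Nat.sub_le n j))
    _ = T * p n := by rw [Finset.sum_const, Nat.card_Ioc, smul_eq_mul, Nat.sub_zero]
  have h3 : (T + 1) * ∑ j ∈ Finset.Ioc T n, p (n - j)
      ≤ n * (3 * Nat.sqrt (2 * n) * p n) := by
    rw [Finset.mul_sum]
    calc ∑ j ∈ Finset.Ioc T n, (T + 1) * p (n - j)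
        ≤ ∑ _j ∈ Finset.Ioc T n, 3 * Nat.sqrt (2 * n) * p n := by
          apply Finset.sum_le_sum
          intro j hj
          rw [Finset.mem_Ioc] at hj
          calc (T + 1) * p (n - j) ≤ j * p (n - j) :=
            Nat.mul_le_mul_right _ (by omega)
          _ ≤ 3 * Nat.sqrt (2 * n) * p n := step3 (by omega) hj.2
    _ = (n - T) * (3 * Nat.sqrt (2 * n) * p n) := by
          rw [Finset.sum_const, Nat.card_Ioc, smul_eq_mul]
    _ ≤ n * (3 * Nat.sqrt (2 * n) * p n) := Nat.mul_le_mul_right _ (Nat.sub_le n T)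
  have hNat : Kn n * (T + 1) ≤ (T + 1) * (T * p n) + n * (3 * Nat.sqrt (2 * n) * p n) := by
    calc Kn n * (T + 1) ≤ (∑ j ∈ Finset.Icc 1 n, p (n - j)) * (T + 1) :=
      Nat.mul_le_mul_right _ (step2 n)
    _ = (T + 1) * (∑ j ∈ Finset.Ioc 0 T, p (n - j))
        + (T + 1) * ∑ j ∈ Finset.Ioc T n, p (n - j) := by rw [hsplit]; ring
    _ ≤ (T + 1) * (T * p n) + n * (3 * Nat.sqrt (2 * n) * p n) :=
      Nat.add_le_add (Nat.mul_le_mul_left _ h1) h3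
  -- move to ℝ
  set q : ℝ := Real.sqrt (Real.sqrt n) with hq
  have h256 : (256:ℝ) ≤ (n:ℝ) := by exact_mod_cast hn
  have hsn : (16:ℝ) ≤ Real.sqrt n := by
    calc (16:ℝ) = Real.sqrt (16 ^ 2) := (Real.sqrt_sq (by norm_num)).symm
    _ ≤ Real.sqrt n := Real.sqrt_le_sqrt (by norm_num; linarith)
  have hq4 : (4:ℝ) ≤ q := by
    calc (4:ℝ) = Real.sqrt (4 ^ 2) := (Real.sqrt_sq (by norm_num)).symm
    _ ≤ q := Real.sqrt_le_sqrt (by norm_num; linarith)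
  have hq0 : (0:ℝ) < q := by linarith
  have hqq : q * q = Real.sqrt n := Real.mul_self_sqrt (Real.sqrt_nonneg _)
  have hnn : Real.sqrt n * Real.sqrt n = (n : ℝ) :=
    Real.mul_self_sqrt (Nat.cast_nonneg _)
  have hn0 : (0:ℝ) < (n:ℝ) := by linarith
  have hp0 : (0:ℝ) < (p n : ℝ) := by exact_mod_cast p_pos n
  have hT1 : (0:ℝ) < (T:ℝ) + 1 := by positivity
  -- upper bound on T
  have hTle : (T : ℝ) ≤ Real.sqrt n * q := by
    have a1 := natSqrt_le_real n
    have a2 : (Nat.sqrt (Nat.sqrt n) : ℝ) ≤ q := by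
      calc (Nat.sqrt (Nat.sqrt n) : ℝ) ≤ Real.sqrt (Nat.sqrt n) := natSqrt_le_real _
      _ ≤ q := Real.sqrt_le_sqrt (natSqrt_le_real n)
    have hTcast : (T:ℝ) = (Nat.sqrt n : ℝ) * (Nat.sqrt (Nat.sqrt n) : ℝ) := by
      rw [hT]; push_cast; ring
    rw [hTcast]
    exact mul_le_mul a1 a2 (Nat.cast_nonneg _) (Real.sqrt_nonneg _)
  -- lower bound on T
  have hTge : q ^ 3 / 8 ≤ (T : ℝ) := by
    have a1 : Real.sqrt n / 2 ≤ (Nat.sqrt n : ℝ) := by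
      have := real_sub_one_le_natSqrt n
      linarith
    have a2 : q / 4 ≤ (Nat.sqrt (Nat.sqrt n) : ℝ) := by
      have b1 := real_sub_one_le_natSqrt (Nat.sqrt n)
      have b2 : q / 2 ≤ Real.sqrt (Nat.sqrt n) := by
        have c1 : ((q / 2) ^ 2 : ℝ) ≤ (Nat.sqrt n : ℝ) := by
          have c2 : (q/2)^2 = (q*q)/4 := by ring
          rw [c2, hqq]
          linarith
        rw [← Real.sqrt_sq (by positivity : (0:ℝ) ≤ q / 2)]
        exact Real.sqrt_le_sqrt c1
      linarith
    have e : q ^ 3 / 8 = (Real.sqrt n / 2) * (q / 4) := by rw [← hqq]; ring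
    have hTcast : (T:ℝ) = (Nat.sqrt n : ℝ) * (Nat.sqrt (Nat.sqrt n) : ℝ) := by
      rw [hT]; push_cast; ring
    rw [e, hTcast]
    exact mul_le_mul a1 a2 (by positivity) (Nat.cast_nonneg _)
  -- bound on sqrt (2n)
  have hs2 : (Nat.sqrt (2*n) : ℝ) ≤ 2 * q^2 := by
    have a1 : (Nat.sqrt (2*n) : ℝ) ≤ Real.sqrt ((2*n : ℕ) : ℝ) := natSqrt_le_real _
    have a2 : Real.sqrt ((2*n : ℕ) : ℝ) = Real.sqrt 2 * Real.sqrt n := by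
      push_cast
      rw [← Real.sqrt_mul (by norm_num)]
    have a3 : Real.sqrt 2 ≤ 2 := by
      calc Real.sqrt 2 ≤ Real.sqrt (2^2) := Real.sqrt_le_sqrt (by norm_num)
      _ = 2 := Real.sqrt_sq (by norm_num)
    have a4 : q ^ 2 = Real.sqrt n := by rw [sq]; exact hqq
    rw [a4]
    calc (Nat.sqrt (2*n) : ℝ) ≤ Real.sqrt 2 * Real.sqrt n := by rw [← a2]; exact a1
    _ ≤ 2 * Real.sqrt n := by
        apply mul_le_mul_of_nonneg_right a3 (Real.sqrt_nonneg _)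
  -- cast the ℕ inequality
  have hcast : (Kn n : ℝ) * ((T:ℝ) + 1)
      ≤ ((T:ℝ) + 1) * ((T:ℝ) * (p n : ℝ))
        + (n:ℝ) * (3 * (Nat.sqrt (2*n) : ℝ) * (p n : ℝ)) := by
    exact_mod_cast hNat
  have e1 : q * (T:ℝ) ≤ (n:ℝ) := by
    calc q * (T:ℝ) ≤ q * (Real.sqrt n * q) :=
      mul_le_mul_of_nonneg_left hTle hq0.le
    _ = (q * q) * Real.sqrt n := by ring
    _ = (n:ℝ) := by rw [hqq, hnn]
  have e2 : q ^ 3 ≤ 8 * ((T:ℝ) + 1) := by nlinarith [hTge]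
  have final : (Kn n : ℝ) * q * ((T:ℝ) + 1) ≤ 49 * ((n:ℝ) * (p n : ℝ)) * ((T:ℝ) + 1) := by
    calc (Kn n : ℝ) * q * ((T:ℝ) + 1) = ((Kn n : ℝ) * ((T:ℝ) + 1)) * q := by ring
    _ ≤ (((T:ℝ) + 1) * ((T:ℝ) * (p n : ℝ))
        + (n:ℝ) * (3 * (Nat.sqrt (2*n) : ℝ) * (p n : ℝ))) * q :=
      mul_le_mul_of_nonneg_right hcast hq0.le
    _ = (q * (T:ℝ)) * (((T:ℝ) + 1) * (p n : ℝ))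
        + (Nat.sqrt (2*n) : ℝ) * (3 * (p n : ℝ) * (n:ℝ) * q) := by ring
    _ ≤ (n:ℝ) * (((T:ℝ) + 1) * (p n : ℝ))
        + (2 * q^2) * (3 * (p n : ℝ) * (n:ℝ) * q) := by
        apply add_le_add
        · exact mul_le_mul_of_nonneg_right e1 (by positivity)
        · exact mul_le_mul_of_nonneg_right hs2 (by positivity)
    _ = (n:ℝ) * (((T:ℝ) + 1) * (p n : ℝ)) + (6 * (p n : ℝ) * (n:ℝ)) * q^3 := by ring
    _ ≤ (n:ℝ) * (((T:ℝ) + 1) * (p n : ℝ))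
        + (6 * (p n : ℝ) * (n:ℝ)) * (8 * ((T:ℝ) + 1)) := by
        apply add_le_add le_rfl
        exact mul_le_mul_of_nonneg_left e2 (by positivity)
    _ = 49 * ((n:ℝ) * (p n : ℝ)) * ((T:ℝ) + 1) := by ring
  have hKq : (Kn n : ℝ) * q ≤ 49 * ((n:ℝ) * (p n : ℝ)) :=
    le_of_mul_le_mul_right final hT1
  rw [div_le_div_iff₀ (by positivity) hq0]
  linarith
lemma tendsto_sqrt_atTop : Filter.Tendsto Real.sqrt Filter.atTop Filter.atTop := by
  apply Filter.tendsto_atTop_atTop.2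
  intro b
  refine ⟨b ^ 2 + 1, fun a ha => ?_⟩
  have h0 : b ≤ Real.sqrt (b ^ 2 + 1) := by
    rcases le_or_gt b 0 with hb | hb
    · exact hb.trans (Real.sqrt_nonneg _)
    · rw [Real.le_sqrt hb.le (by positivity)]
      linarith
  exact h0.trans (Real.sqrt_le_sqrt ha)

lemma tendsto_q : Filter.Tendsto (fun n : ℕ => Real.sqrt (Real.sqrt n))
    Filter.atTop Filter.atTop :=
  (tendsto_sqrt_atTop.comp tendsto_sqrt_atTop).comp tendsto_natCast_atTop_atTop

lemma ratio_tendsto :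
    Filter.Tendsto (fun n : ℕ => (Kn n : ℝ) / ((n : ℝ) * (p n : ℝ)))
      Filter.atTop (nhds 0) := by
  apply tendsto_of_tendsto_of_tendsto_of_le_of_le' tendsto_const_nhds
    (Filter.Tendsto.div_atTop (tendsto_const_nhds (x := (49:ℝ))) tendsto_q)
  · exact Filter.Eventually.of_forall (fun n => by positivity)
  · filter_upwards [Filter.eventually_ge_atTop 256] with n hn using ratio_le hn

lemma pNW_eq (n : ℕ) : pNW n = p n := by
  have e : {m : Multiset (ℕ × ℕ) //
      (∀ ab ∈ m, 1 ≤ ab.2 ∧ Nat.gcd ab.1 ab.2 = 1) ∧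
      (m.map fun ab => ab.1 + ab.2).sum = n} ≃ {m // m ∈ S n} :=
    Equiv.subtypeEquivRight (fun m => mem_S.symm)
  rw [pNW, Nat.card_congr e, Nat.card_eq_finsetCard]
  rfl

lemma HNW_eq (n : ℕ) : HNW n = (Hn n : ℝ) := by
  have h0 : HNW n = ∑' (m : {m : Multiset (ℕ × ℕ) //
      (∀ ab ∈ m, 1 ≤ ab.2 ∧ Nat.gcd ab.1 ab.2 = 1) ∧
      (m.map fun ab => ab.1 + ab.2).sum = n}),
      (((m : Multiset (ℕ × ℕ)).map Prod.fst).sum : ℝ) := by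
    rw [HNW]
    apply tsum_congr
    intro m
    rw [Nat.cast_multiset_sum, Multiset.map_map]
    rfl
  have h1 : HNW n = ∑' (m : {m // m ∈ S n}), (((m : Multiset (ℕ × ℕ)).map Prod.fst).sum : ℝ) := by
    rw [h0, ← Equiv.tsum_eq (Equiv.subtypeEquivRight (fun m => mem_S.symm))
      (fun m : {m // m ∈ S n} => (((m : Multiset (ℕ × ℕ)).map Prod.fst).sum : ℝ))]
    exact tsum_congr (fun c => rfl)
  rw [h1, Finset.tsum_subtype (S n) (fun m => (((m.map Prod.fst).sum : ℕ) : ℝ))]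
  rw [Hn]
  push_cast
  rfl

end AvgEnd

/-- The average abscissa of the ending point of a uniformly random NW-convex path of size `n`
is asymptotically `n/2`: `H(n)/(n p(n)) → 1/2`. -/
theorem average_endpoint :
    Tendsto (fun n : ℕ => HNW n / ((n : ℝ) * (pNW n : ℝ))) atTop (nhds (1 / 2)) := by
  have hev : ∀ᶠ n in Filter.atTop, HNW n / ((n : ℝ) * (pNW n : ℝ))
      = 1/2 - ((AvgEnd.Kn n : ℝ) / ((n : ℝ) * (AvgEnd.p n : ℝ))) / 2 := by
    filter_upwards [Filter.eventually_ge_atTop 1] with n hn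
    rw [AvgEnd.HNW_eq, AvgEnd.pNW_eq]
    have hcast : 2 * (AvgEnd.Hn n : ℝ) + (AvgEnd.Kn n : ℝ)
        = (n : ℝ) * (AvgEnd.p n : ℝ) := by
      exact_mod_cast AvgEnd.step1 n
    have hn0 : (0:ℝ) < (n:ℝ) := by exact_mod_cast hn
    have hp0 : (0:ℝ) < (AvgEnd.p n : ℝ) := by exact_mod_cast AvgEnd.p_pos n
    field_simp
    ring_nf
    nlinarith [hcast]
  rw [Filter.tendsto_congr' hev]
  have h := (tendsto_const_nhds (x := (1/2 : ℝ)) (f := Filter.atTop)).sub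
    (AvgEnd.ratio_tendsto.div_const 2)
  simpa using h
end

section
/- As x → 1⁻ (x real, 0 < x < 1), μ₁(x) := ∑_{n≥1} n·φ(n)·xⁿ/(1−xⁿ) is asymptotically equivalent to 12ζ(3)/(π²(1−x)³); that is, μ₁(x)·(1−x)³ → 12ζ(3)/π². (μ₁(x) = x·S′(x)/S(x) is the expected size of the output of the Boltzmann sampler of parameter x for NW-convex paths.) -/
open Real Filter

open scoped ArithmeticFunction LSeries.notation

private def cAux (n : ℕ) : ℤ := ∑ e ∈ n.divisors, ArithmeticFunction.moebius e * e

private def cFun : ArithmeticFunction ℤ :=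
  ((ArithmeticFunction.moebius).pmul
      ((ArithmeticFunction.id : ArithmeticFunction ℕ) : ArithmeticFunction ℤ)) *
    ((ArithmeticFunction.zeta : ArithmeticFunction ℕ) : ArithmeticFunction ℤ)

private lemma cFun_apply (n : ℕ) : cFun n = cAux n := by
  rw [cFun, ArithmeticFunction.coe_mul_zeta_apply, cAux]
  refine Finset.sum_congr rfl fun e he => ?_
  simp [ArithmeticFunction.pmul_apply]

private lemma cFun_mult : cFun.IsMultiplicative :=
  (ArithmeticFunction.isMultiplicative_moebius.pmul
    ArithmeticFunction.isMultiplicative_id.natCast).mul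
    ArithmeticFunction.isMultiplicative_zeta.natCast

private lemma moebius_pow_sum {p : ℕ} (hp : p.Prime) {k : ℕ} (hk : 1 ≤ k) :
    ∑ i ∈ Finset.range (k + 1),
      (ArithmeticFunction.moebius (p ^ i) * ((p ^ i : ℕ) : ℤ)) = 1 - p := by
  induction k with
  | zero => omega
  | succ k ih =>
    rcases Nat.eq_zero_or_pos k with rfl | hkpos
    · simp [Finset.sum_range_succ, ArithmeticFunction.moebius_apply_prime hp]
      ring
    · rw [Finset.sum_range_succ, ih hkpos,
        ArithmeticFunction.moebius_apply_prime_pow hp (by omega : k + 1 ≠ 0),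
        if_neg (by omega : ¬ k + 1 = 1)]
      simp

private lemma cAux_prime_pow {p k : ℕ} (hp : p.Prime) (hk : 1 ≤ k) :
    cAux (p ^ k) = 1 - p := by
  rw [cAux, Nat.sum_divisors_prime_pow hp]
  exact moebius_pow_sum hp hk

private lemma cAux_bound (n : ℕ) : |cAux n| ≤ (n : ℤ) := by
  rcases Nat.eq_zero_or_pos n with rfl | hn
  · simp [cAux]
  rw [← cFun_apply, cFun_mult.multiplicative_factorization cFun hn.ne']
  have hrw : (n : ℤ) = ((n.factorization.prod fun p k => p ^ k : ℕ) : ℤ) := by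
    rw [Nat.factorization_prod_pow_eq_self hn.ne']
  rw [hrw, Finsupp.prod, Finsupp.prod, Nat.cast_prod, Finset.abs_prod]
  apply Finset.prod_le_prod (fun i _ => abs_nonneg _)
  intro p hp
  have hpp : p.Prime := Nat.prime_of_mem_primeFactors (by
    rwa [← Nat.support_factorization])
  have hk : 1 ≤ n.factorization p := by
    have := Finsupp.mem_support_iff.mp hp
    omega
  rw [cFun_apply, cAux_prime_pow hpp hk]
  have h2 : (2 : ℤ) ≤ p := by exact_mod_cast hpp.two_le
  have habs : |1 - (p : ℤ)| = p - 1 := by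
    rw [abs_sub_comm, abs_of_nonneg (by linarith)]
  rw [habs]
  have hle : (p : ℤ) ≤ ((p ^ n.factorization p : ℕ) : ℤ) := by
    exact_mod_cast Nat.le_self_pow (by omega) p
  linarith

private lemma coeff_identity (N : ℕ) :
    ∑ p ∈ N.divisorsAntidiagonal, ((p.1 : ℤ) * (Nat.totient p.1 : ℤ)) =
      ∑ p ∈ N.divisorsAntidiagonal, cAux p.1 * (p.2 : ℤ) ^ 2 := by
  rcases Nat.eq_zero_or_pos N with rfl | hN
  · simp
  set Id : ArithmeticFunction ℤ :=
    ((ArithmeticFunction.id : ArithmeticFunction ℕ) : ArithmeticFunction ℤ) with hId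
  set Z : ArithmeticFunction ℤ :=
    ((ArithmeticFunction.zeta : ArithmeticFunction ℕ) : ArithmeticFunction ℤ) with hZ
  set Phi : ArithmeticFunction ℤ := ⟨fun n => (Nat.totient n : ℤ), by simp⟩ with hPhi
  have hPhiApp : ∀ n : ℕ, Phi n = (Nat.totient n : ℤ) := fun n => rfl
  have hIdApp : ∀ n : ℕ, Id n = (n : ℤ) := by
    intro n; rw [hId, ArithmeticFunction.natCoe_apply, ArithmeticFunction.id_apply]
  have hzp : Z * Phi = Id := by
    ext n
    rw [ArithmeticFunction.coe_zeta_mul_apply, hIdApp]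
    have : ∑ i ∈ n.divisors, Phi i = ((∑ i ∈ n.divisors, Nat.totient i : ℕ) : ℤ) := by
      push_cast; exact Finset.sum_congr rfl fun i _ => hPhiApp i
    rw [this, Nat.sum_totient]
  have hphi : Phi = ArithmeticFunction.moebius * Id := by
    calc Phi = 1 * Phi := (one_mul _).symm
    _ = (ArithmeticFunction.moebius * Z) * Phi := by
        rw [hZ, ArithmeticFunction.moebius_mul_coe_zeta]
    _ = ArithmeticFunction.moebius * (Z * Phi) := mul_assoc _ _ _
    _ = ArithmeticFunction.moebius * Id := by rw [hzp]
  have hdistrib : ∀ f g : ArithmeticFunction ℤ,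
      (f * g).pmul Id = (f.pmul Id) * (g.pmul Id) := by
    intro f g
    ext n
    rw [ArithmeticFunction.pmul_apply, ArithmeticFunction.mul_apply,
      ArithmeticFunction.mul_apply, Finset.sum_mul]
    refine Finset.sum_congr rfl fun p hp => ?_
    obtain ⟨h1, h2⟩ := Nat.mem_divisorsAntidiagonal.mp hp
    rw [ArithmeticFunction.pmul_apply, ArithmeticFunction.pmul_apply,
      hIdApp, hIdApp, hIdApp, ← h1]
    push_cast
    ring
  have main : (Id.pmul Phi) * Z = cFun * (Id.pmul Id) := by
    rw [hphi, ArithmeticFunction.pmul_comm, hdistrib, cFun, ← hId, ← hZ]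
    ring
  have hmainN := congrArg (fun f : ArithmeticFunction ℤ => f N) main
  simp only [ArithmeticFunction.mul_apply] at hmainN
  have hL : ∑ p ∈ N.divisorsAntidiagonal, (Id.pmul Phi) p.1 * Z p.2
      = ∑ p ∈ N.divisorsAntidiagonal, ((p.1 : ℤ) * (Nat.totient p.1 : ℤ)) := by
    refine Finset.sum_congr rfl fun p hp => ?_
    obtain ⟨h1, h2⟩ := Nat.mem_divisorsAntidiagonal.mp hp
    have hp2 : p.2 ≠ 0 := by
      rintro h0
      rw [h0, Nat.mul_zero] at h1
      omega
    rw [ArithmeticFunction.pmul_apply, hIdApp, hPhiApp, hZ,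
      ArithmeticFunction.natCoe_apply, ArithmeticFunction.zeta_apply_ne hp2]
    push_cast
    ring
  have hR : ∑ p ∈ N.divisorsAntidiagonal, cFun p.1 * (Id.pmul Id) p.2
      = ∑ p ∈ N.divisorsAntidiagonal, cAux p.1 * (p.2 : ℤ) ^ 2 := by
    refine Finset.sum_congr rfl fun p hp => ?_
    rw [ArithmeticFunction.pmul_apply, hIdApp, cFun_apply]
    ring
  rw [← hL, ← hR]
  exact hmainN

private lemma sq_geom {y : ℝ} (h0 : 0 ≤ y) (h1 : y < 1) :
    ∑' k : ℕ, (k : ℝ) ^ 2 * y ^ k = y * (1 + y) / (1 - y) ^ 3 := by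
  have hy : ‖y‖ < 1 := by rwa [Real.norm_eq_abs, abs_of_nonneg h0]
  have A := hasSum_choose_mul_geometric_of_norm_lt_one 2 hy
  have B := hasSum_coe_mul_geometric_of_norm_lt_one hy
  have C := hasSum_geometric_of_norm_lt_one hy
  have comb := ((A.mul_left 2).sub (B.mul_left 3)).sub (C.mul_left 2)
  have hch : ∀ k : ℕ, ((k + 2).choose 2 : ℝ) = ((k : ℝ) + 2) * ((k : ℝ) + 1) / 2 := by
    intro k
    rw [Nat.choose_two_right]
    have hdvd : 2 ∣ (k + 2) * (k + 2 - 1) := by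
      rw [show k + 2 - 1 = k + 1 by omega]
      rw [mul_comm]
      exact (Nat.even_mul_succ_self (k + 1)).two_dvd
    rw [Nat.cast_div hdvd (by norm_num)]
    push_cast
    norm_num
  have heq : (fun k : ℕ => 2 * (((k + 2).choose 2 : ℝ) * y ^ k) - 3 * ((k : ℝ) * y ^ k)
      - 2 * y ^ k) = fun k : ℕ => (k : ℝ) ^ 2 * y ^ k := by
    funext k
    rw [hch k]
    ring
  rw [heq] at comb
  rw [comb.tsum_eq]
  have h1y : (1 : ℝ) - y ≠ 0 := by linarith
  field_simp
  ring

private lemma ind_geom {y : ℝ} (h0 : 0 ≤ y) (h1 : y < 1) :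
    ∑' j : ℕ, (if j = 0 then (0 : ℝ) else 1) * y ^ j = y / (1 - y) := by
  have hy : ‖y‖ < 1 := by rwa [Real.norm_eq_abs, abs_of_nonneg h0]
  have C : HasSum (fun n : ℕ => (if n + 1 = 0 then (0 : ℝ) else 1) * y ^ (n + 1))
      (y / (1 - y)) := by
    have h2 : (fun n : ℕ => (if n + 1 = 0 then (0 : ℝ) else 1) * y ^ (n + 1))
        = fun n : ℕ => y * y ^ n := by
      funext n
      rw [if_neg (Nat.succ_ne_zero n), one_mul, pow_succ, mul_comm]
    rw [h2, div_eq_mul_inv]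
    exact (hasSum_geometric_of_norm_lt_one hy).mul_left y
  have D := (hasSum_nat_add_iff (f := fun j : ℕ => (if j = 0 then (0 : ℝ) else 1) * y ^ j) 1).mp C
  norm_num at D
  rw [← D.tsum_eq]
  apply tsum_congr
  intro j
  by_cases h : j = 0 <;> simp [h]

private lemma lambert_hasSum {x : ℝ} (hx0 : 0 < x) (hx1 : x < 1) {F G : ℕ → ℝ}
    (hF : ∀ n, |F n| ≤ (n : ℝ) ^ 2) (hG : ∀ n, |G n| ≤ (n : ℝ) ^ 2) :
    ∃ S : ℝ, HasSum (fun n : ℕ => F n * ∑' j : ℕ, G j * (x ^ n) ^ j) S ∧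
      HasSum (fun N : ℕ => (∑ p ∈ N.divisorsAntidiagonal, F p.1 * G p.2) * x ^ N) S := by
  have hxn : ‖x‖ < 1 := by rw [Real.norm_eq_abs, abs_of_nonneg hx0.le]; exact hx1
  have hF0 : F 0 = 0 := by
    have := hF 0; simp only [Nat.cast_zero, ne_eq, OfNat.ofNat_ne_zero,
      not_false_eq_true, zero_pow] at this
    exact abs_nonpos_iff.mp this
  have hG0 : G 0 = 0 := by
    have := hG 0; simp only [Nat.cast_zero, ne_eq, OfNat.ofNat_ne_zero,
      not_false_eq_true, zero_pow] at this
    exact abs_nonpos_iff.mp this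
  set h : ℕ × ℕ → ℝ := fun p => F p.1 * G p.2 * x ^ (p.1 * p.2) with hh
  -- summability of the double series
  have hb1 : Summable (fun n : ℕ => (n : ℝ) ^ 2 * x ^ n) :=
    summable_pow_mul_geometric_of_norm_lt_one 2 hxn
  have hb1' : Summable (fun n : ℕ => ‖(n : ℝ) ^ 2 * x ^ n‖) := by
    refine hb1.congr fun n => ?_
    rw [Real.norm_eq_abs, abs_of_nonneg (by positivity)]
  have hbprod : Summable (fun p : ℕ × ℕ =>
      ((p.1 : ℝ) ^ 2 * x ^ p.1) * ((p.2 : ℝ) ^ 2 * x ^ p.2) * x⁻¹) :=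
    (summable_mul_of_summable_norm hb1' hb1').mul_right x⁻¹
  have hsum : Summable h := by
    refine Summable.of_norm_bounded hbprod fun p => ?_
    obtain ⟨n, j⟩ := p
    obtain _ | a := n
    · simp [hh, hF0]
    obtain _ | b := j
    · simp [hh, hG0]
    set n := a + 1 with hn'
    set j := b + 1 with hj'
    have hexp : n + j - 1 ≤ n * j := by
      have hmul : n * j = a * b + a + b + 1 := by rw [hn', hj']; ring
      omega
    have hpow : x ^ (n * j) ≤ x ^ (n + j - 1) :=
      pow_le_pow_of_le_one hx0.le hx1.le hexp
    have hsplit : x ^ (n + j - 1) = x ^ n * x ^ j * x⁻¹ := by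
      have hxne : x ≠ 0 := hx0.ne'
      rw [show n + j - 1 = a + b + 1 by omega, hn', hj']
      field_simp
      ring
    calc ‖h (n, j)‖ = |F n| * |G j| * x ^ (n * j) := by
          rw [hh]; simp only [Real.norm_eq_abs, abs_mul]
          rw [abs_of_nonneg (by positivity : (0:ℝ) ≤ x ^ (n * j))]
    _ ≤ (n : ℝ) ^ 2 * (j : ℝ) ^ 2 * x ^ (n + j - 1) := by
          apply mul_le_mul (mul_le_mul (hF n) (hG j) (abs_nonneg _) (by positivity)) hpow
            (by positivity) (by positivity)
    _ = ((n : ℝ) ^ 2 * x ^ n) * ((j : ℝ) ^ 2 * x ^ j) * x⁻¹ := by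
          rw [hsplit]; ring
  refine ⟨∑' p, h p, ?_, ?_⟩
  · -- fiberwise in the first coordinate
    refine HasSum.prod_fiberwise hsum.hasSum fun n => ?_
    rcases Nat.eq_zero_or_pos n with rfl | hn
    · have : (fun j : ℕ => h (0, j)) = fun _ => 0 := by
        funext j; simp [hh, hF0]
      rw [this, hF0, zero_mul]
      exact hasSum_zero
    · have hxn1 : ‖x ^ n‖ < 1 := by
        rw [norm_pow]
        exact pow_lt_one₀ (norm_nonneg x) hxn (by omega)
      have hginner : Summable (fun j : ℕ => G j * (x ^ n) ^ j) := by
        refine Summable.of_norm_bounded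
          (summable_pow_mul_geometric_of_norm_lt_one 2 hxn1) fun j => ?_
        rw [Real.norm_eq_abs, abs_mul, abs_of_nonneg (by positivity : (0:ℝ) ≤ (x ^ n) ^ j)]
        exact mul_le_mul_of_nonneg_right (hG j) (by positivity)
      have := hginner.hasSum.mul_left (F n)
      refine this.congr_fun fun j => ?_
      rw [hh]; simp only [← pow_mul]; ring
  · -- fiberwise along the product map
    have hfib := hsum.hasSum.tsum_fiberwise (fun p : ℕ × ℕ => p.1 * p.2)
    have hcong : ∀ N : ℕ, (∑' (p : (fun p : ℕ × ℕ => p.1 * p.2) ⁻¹' {N}), h ↑p)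
        = (∑ p ∈ N.divisorsAntidiagonal, F p.1 * G p.2) * x ^ N := by
      intro N
      rcases Nat.eq_zero_or_pos N with rfl | hN
      · have hz : ∀ p : (fun p : ℕ × ℕ => p.1 * p.2) ⁻¹' {(0 : ℕ)}, h ↑p = 0 := by
          rintro ⟨⟨n, j⟩, hp⟩
          simp only [Set.mem_preimage, Set.mem_singleton_iff, Nat.mul_eq_zero] at hp
          rcases hp with rfl | rfl
          · simp [hh, hF0]
          · simp [hh, hG0]
        rw [tsum_congr hz]
        simp
      · rw [show (fun p : ℕ × ℕ => p.1 * p.2) ⁻¹' {N} = ↑(N.divisorsAntidiagonal) by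
            ext p; simp [Nat.mem_divisorsAntidiagonal, hN.ne']]
        rw [Finset.tsum_subtype' N.divisorsAntidiagonal h, Finset.sum_mul]
        refine Finset.sum_congr rfl fun p hp => ?_
        obtain ⟨hp1, -⟩ := Nat.mem_divisorsAntidiagonal.mp hp
        show F p.1 * G p.2 * x ^ (p.1 * p.2) = F p.1 * G p.2 * x ^ N
        rw [hp1]
    have heq : (fun N : ℕ => ∑' (p : (fun p : ℕ × ℕ => p.1 * p.2) ⁻¹' {N}), h ↑p)
        = fun N : ℕ => (∑ p ∈ N.divisorsAntidiagonal, F p.1 * G p.2) * x ^ N :=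
      funext hcong
    rwa [heq] at hfib

set_option maxHeartbeats 1000000 in
private lemma rewrite_T {x : ℝ} (hx0 : 0 < x) (hx1 : x < 1) :
    (∑' n : ℕ, ((n + 1 : ℕ) : ℝ) * (Nat.totient (n + 1) : ℝ) * x ^ (n + 1) /
        (1 - x ^ (n + 1))) * (1 - x) ^ 3
      = ∑' m : ℕ, (cAux (m + 1) : ℝ) *
          (x ^ (m + 1) * (1 + x ^ (m + 1)) / (1 - x ^ (m + 1)) ^ 3 * (1 - x) ^ 3) := by
  have hF1 : ∀ n : ℕ, |(n : ℝ) * (Nat.totient n : ℝ)| ≤ (n : ℝ) ^ 2 := by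
    intro n
    have h1 : (0 : ℝ) ≤ (n : ℝ) * (Nat.totient n : ℝ) := by positivity
    rw [abs_of_nonneg h1, sq]
    apply mul_le_mul_of_nonneg_left _ (Nat.cast_nonneg n)
    exact_mod_cast Nat.totient_le n
  have hG1 : ∀ j : ℕ, |if j = 0 then (0 : ℝ) else 1| ≤ (j : ℝ) ^ 2 := by
    intro j
    rcases Nat.eq_zero_or_pos j with rfl | hj
    · simp
    · rw [if_neg hj.ne', abs_one]
      have : (1 : ℝ) ≤ (j : ℝ) := by exact_mod_cast hj
      nlinarith
  have hF2 : ∀ m : ℕ, |(cAux m : ℝ)| ≤ (m : ℝ) ^ 2 := by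
    intro m
    have h1 : |(cAux m : ℝ)| ≤ (m : ℝ) := by
      rw [← Int.cast_abs]
      exact_mod_cast cAux_bound m
    rcases Nat.eq_zero_or_pos m with rfl | hm
    · simpa using h1
    · have : (1 : ℝ) ≤ (m : ℝ) := by exact_mod_cast hm
      nlinarith [abs_nonneg ((cAux m : ℝ))]
  have hG2 : ∀ k : ℕ, |(k : ℝ) ^ 2| ≤ (k : ℝ) ^ 2 := by
    intro k; rw [abs_of_nonneg (by positivity)]
  obtain ⟨S1, h1a, h1b⟩ := lambert_hasSum hx0 hx1 hF1 hG1
  obtain ⟨S2, h2a, h2b⟩ := lambert_hasSum hx0 hx1 hF2 hG2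
  -- the two coefficient sequences agree
  have hS : S1 = S2 := by
    refine HasSum.unique h1b (h2b.congr_fun fun N => ?_)
    congr 1
    have hZ := coeff_identity N
    have hcong : ∀ p ∈ N.divisorsAntidiagonal,
        ((p.1 : ℝ) * (Nat.totient p.1 : ℝ)) * (if p.2 = 0 then (0 : ℝ) else 1)
          = ((p.1 : ℝ) * (Nat.totient p.1 : ℝ)) := by
      intro p hp
      obtain ⟨h1, h2⟩ := Nat.mem_divisorsAntidiagonal.mp hp
      have hp2 : p.2 ≠ 0 := by rintro h0; rw [h0, Nat.mul_zero] at h1; omega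
      rw [if_neg hp2, mul_one]
    rw [Finset.sum_congr rfl hcong]
    exact_mod_cast hZ
  -- shift the first series
  have hshift1 : HasSum (fun n : ℕ => ((n + 1 : ℕ) : ℝ) * (Nat.totient (n + 1) : ℝ) *
      ∑' j : ℕ, (if j = 0 then (0 : ℝ) else 1) * (x ^ (n + 1)) ^ j) S1 := by
    refine (hasSum_nat_add_iff (f := fun n : ℕ => (n : ℝ) * (Nat.totient n : ℝ) *
      ∑' j : ℕ, (if j = 0 then (0 : ℝ) else 1) * (x ^ n) ^ j) 1).mpr ?_
    simpa using h1a
  have hLHS : (∑' n : ℕ, ((n + 1 : ℕ) : ℝ) * (Nat.totient (n + 1) : ℝ) * x ^ (n + 1) /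
      (1 - x ^ (n + 1))) = S1 := by
    rw [← hshift1.tsum_eq]
    refine tsum_congr fun n => ?_
    have hy0 : (0 : ℝ) ≤ x ^ (n + 1) := by positivity
    have hy1 : x ^ (n + 1) < 1 := pow_lt_one₀ hx0.le hx1 (by omega)
    rw [ind_geom hy0 hy1]
    push_cast
    ring
  -- shift the second series
  have hg0 : (cAux 0 : ℝ) = 0 := by simp [cAux]
  have hshift2 : HasSum (fun m : ℕ => (cAux (m + 1) : ℝ) *
      ∑' k : ℕ, (k : ℝ) ^ 2 * (x ^ (m + 1)) ^ k) S2 := by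
    refine (hasSum_nat_add_iff (f := fun m : ℕ => (cAux m : ℝ) *
      ∑' k : ℕ, (k : ℝ) ^ 2 * (x ^ m) ^ k) 1).mpr ?_
    simpa [hg0] using h2a
  have hRHS : HasSum (fun m : ℕ => (cAux (m + 1) : ℝ) *
      (x ^ (m + 1) * (1 + x ^ (m + 1)) / (1 - x ^ (m + 1)) ^ 3 * (1 - x) ^ 3))
      (S2 * (1 - x) ^ 3) := by
    refine (hshift2.mul_right ((1 - x) ^ 3)).congr_fun fun m => ?_
    have hy0 : (0 : ℝ) ≤ x ^ (m + 1) := by positivity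
    have hy1 : x ^ (m + 1) < 1 := pow_lt_one₀ hx0.le hx1 (by omega)
    rw [sq_geom hy0 hy1]
    ring
  rw [hLHS, hS]
  exact hRHS.tsum_eq.symm

private lemma dom_bound {x : ℝ} (hx0 : 0 < x) (hx1 : x < 1) {k : ℕ} (hk : 1 ≤ k) :
    x ^ k * (1 + x ^ k) / (1 - x ^ k) ^ 3 * (1 - x) ^ 3 ≤ 12 / (k : ℝ) ^ 3 := by
  set t : ℝ := k * (1 - x) with ht
  have hkpos : (0 : ℝ) < k := by exact_mod_cast hk
  have htpos : 0 < t := by rw [ht]; exact mul_pos hkpos (by linarith)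
  -- x^k ≤ exp (-t)
  have hxe : x ≤ exp (x - 1) := by
    have := Real.add_one_le_exp (x - 1); linarith
  have hxk : x ^ k ≤ exp (-t) := by
    calc x ^ k ≤ (exp (x - 1)) ^ k := pow_le_pow_left₀ hx0.le hxe k
    _ = exp (k * (x - 1)) := by rw [← Real.exp_nat_mul]
    _ = exp (-t) := by rw [ht]; ring_nf
  have het : exp (-t) < 1 := by
    rw [Real.exp_lt_one_iff]; linarith
  have hxk1 : x ^ k < 1 := pow_lt_one₀ hx0.le hx1 (by omega)
  have hxkpos : 0 < x ^ k := pow_pos hx0 k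
  have hd1 : (0 : ℝ) < 1 - exp (-t) := by linarith
  have hd2 : 0 < 1 - x ^ k := by linarith
  -- key scalar inequality
  have hexp_ge : 1 + t ≤ exp t := by have := Real.add_one_le_exp t; linarith
  have hinv : exp (-t) * (1 + t) ≤ 1 := by
    rw [Real.exp_neg]
    rw [inv_mul_le_iff₀ (exp_pos t), mul_one]
    exact hexp_ge
  have hte : t ≤ (1 + t) * (1 - exp (-t)) := by nlinarith [exp_pos (-t)]
  have hcube : t ^ 3 ≤ (1 + t) ^ 3 * (1 - exp (-t)) ^ 3 := by
    calc t ^ 3 ≤ ((1 + t) * (1 - exp (-t))) ^ 3 :=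
          pow_le_pow_left₀ htpos.le hte 3
    _ = (1 + t) ^ 3 * (1 - exp (-t)) ^ 3 := by ring
  have hsix : (1 + t) ^ 3 ≤ 6 * exp t := by
    have h4 := Real.sum_le_exp_of_nonneg htpos.le 4
    have hexpand : ∑ i ∈ Finset.range 4, t ^ i / (Nat.factorial i) =
        1 + t + t ^ 2 / 2 + t ^ 3 / 6 := by
      norm_num [Finset.sum_range_succ, Nat.factorial]
    rw [hexpand] at h4
    nlinarith [sq_nonneg t, pow_nonneg htpos.le 3]
  have hmain : exp (-t) * t ^ 3 ≤ 6 * (1 - exp (-t)) ^ 3 := by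
    have h1 : exp (-t) * t ^ 3 ≤ exp (-t) * ((1 + t) ^ 3 * (1 - exp (-t)) ^ 3) :=
      mul_le_mul_of_nonneg_left hcube (exp_pos (-t)).le
    have h2 : exp (-t) * (1 + t) ^ 3 ≤ 6 := by
      calc exp (-t) * (1 + t) ^ 3 ≤ exp (-t) * (6 * exp t) :=
            mul_le_mul_of_nonneg_left hsix (exp_pos (-t)).le
      _ = 6 := by
            rw [show rexp (-t) * (6 * rexp t) = 6 * (rexp (-t) * rexp t) by ring,
              ← Real.exp_add]
            simp
    calc exp (-t) * t ^ 3 ≤ exp (-t) * (1 + t) ^ 3 * (1 - exp (-t)) ^ 3 := by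
          nlinarith [h1]
    _ ≤ 6 * (1 - exp (-t)) ^ 3 := mul_le_mul_of_nonneg_right h2 (by positivity)
  -- assemble
  have h1x : 1 - x = t / k := by field_simp [ht]; rw [ht]; ring
  have step1 : x ^ k * (1 + x ^ k) / (1 - x ^ k) ^ 3 * (1 - x) ^ 3
      = x ^ k * (1 + x ^ k) * (1 - x) ^ 3 / (1 - x ^ k) ^ 3 := by ring
  rw [step1]
  have step2 : x ^ k * (1 + x ^ k) * (1 - x) ^ 3 / (1 - x ^ k) ^ 3
      ≤ exp (-t) * 2 * (1 - x) ^ 3 / (1 - exp (-t)) ^ 3 := by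
    have h1xnn : (0 : ℝ) ≤ 1 - x := by linarith
    apply div_le_div₀ ?_ ?_ (by positivity) ?_
    · exact mul_nonneg (by positivity) (pow_nonneg h1xnn 3)
    · refine mul_le_mul_of_nonneg_right ?_ (pow_nonneg h1xnn 3)
      exact mul_le_mul hxk (by linarith) (by positivity) (exp_pos _).le
    · exact pow_le_pow_left₀ hd1.le (by linarith) 3
  refine step2.trans ?_
  rw [h1x, div_pow, div_le_div_iff₀ (by positivity) (by positivity)]
  have : exp (-t) * 2 * (t ^ 3 / (k : ℝ) ^ 3) * (k : ℝ) ^ 3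
      = 2 * (exp (-t) * t ^ 3) := by field_simp
  rw [this]
  nlinarith [hmain]

private lemma term_tendsto' (a : ℝ) {k : ℕ} (hk : 1 ≤ k) :
    Tendsto (fun x : ℝ => a * (x ^ k * (1 + x ^ k) / (1 - x ^ k) ^ 3 * (1 - x) ^ 3))
      (nhdsWithin 1 (Set.Ioo (0 : ℝ) 1)) (nhds (a * (2 / (k : ℝ) ^ 3))) := by
  have hkR : (0 : ℝ) < k := by exact_mod_cast hk
  have base : Tendsto (fun x : ℝ => x ^ k * (1 + x ^ k) / (∑ i ∈ Finset.range k, x ^ i) ^ 3)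
      (nhds 1) (nhds (2 / (k : ℝ) ^ 3)) := by
    have hc : ContinuousAt (fun x : ℝ => x ^ k * (1 + x ^ k) / (∑ i ∈ Finset.range k, x ^ i) ^ 3)
        1 := by
      apply ContinuousAt.div (by fun_prop) (by fun_prop)
      simp only [one_pow, Finset.sum_const, Finset.card_range, nsmul_eq_mul, mul_one]
      positivity
    have hval : (fun x : ℝ => x ^ k * (1 + x ^ k) / (∑ i ∈ Finset.range k, x ^ i) ^ 3) 1
        = 2 / (k : ℝ) ^ 3 := by
      simp only [one_pow, Finset.sum_const, Finset.card_range, nsmul_eq_mul, mul_one]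
      norm_num
      try ring
    rw [← hval]
    exact hc.tendsto
  have base' : Tendsto (fun x : ℝ => x ^ k * (1 + x ^ k) / (1 - x ^ k) ^ 3 * (1 - x) ^ 3)
      (nhdsWithin 1 (Set.Ioo (0 : ℝ) 1)) (nhds (2 / (k : ℝ) ^ 3)) := by
    apply (base.mono_left nhdsWithin_le_nhds).congr'
    filter_upwards [self_mem_nhdsWithin] with x hx
    obtain ⟨hx0, hx1⟩ := hx
    have hgs : (∑ i ∈ Finset.range k, x ^ i) * (1 - x) = 1 - x ^ k := by
      have := geom_sum_mul x k
      nlinarith [this]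
    have hs : 0 < ∑ i ∈ Finset.range k, x ^ i := by
      apply Finset.sum_pos (fun i _ => pow_pos hx0 i)
      exact Finset.nonempty_range_iff.mpr (by omega)
    have h1x : (1 : ℝ) - x ≠ 0 := by linarith
    rw [← hgs]
    field_simp
  simpa using base'.const_mul a

private lemma term_eq (n : ℕ) :
    LSeries.term (fun m : ℕ => (ArithmeticFunction.moebius m : ℂ) * m) 3 n
      = LSeries.term ↗ArithmeticFunction.moebius 2 n := by
  rcases eq_or_ne n 0 with rfl | hn
  · simp [LSeries.term_zero]
  rw [LSeries.term_of_ne_zero hn, LSeries.term_of_ne_zero hn]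
  have hcast : ∀ (k : ℕ), ((n : ℂ)) ^ ((k : ℕ) : ℂ) = (n : ℂ) ^ (k : ℕ) :=
    fun k => Complex.cpow_natCast _ k
  have h3 : ((n : ℂ)) ^ (3 : ℂ) = (n : ℂ) ^ (3 : ℕ) := by
    rw [show (3 : ℂ) = ((3 : ℕ) : ℂ) by norm_num]; exact hcast 3
  have h2 : ((n : ℂ)) ^ (2 : ℂ) = (n : ℂ) ^ (2 : ℕ) := by
    rw [show (2 : ℂ) = ((2 : ℕ) : ℂ) by norm_num]; exact hcast 2
  rw [h3, h2]
  have hne : (n : ℂ) ≠ 0 := Nat.cast_ne_zero.mpr hn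
  field_simp

private lemma conv_eq :
    (fun n : ℕ => (cAux n : ℂ))
      = (fun m : ℕ => (ArithmeticFunction.moebius m : ℂ) * m) ⍟ ↗ArithmeticFunction.zeta := by
  funext n
  simp only [LSeries.convolution_def]
  rcases eq_or_ne n 0 with rfl | hn
  · simp [cAux]
  rw [Nat.sum_divisorsAntidiagonal (fun i j => (ArithmeticFunction.moebius i : ℂ) * i *
    (ArithmeticFunction.zeta j : ℂ))]
  rw [cAux]
  push_cast
  refine Finset.sum_congr rfl fun e he => ?_
  have hd : n / e ≠ 0 := by
    obtain ⟨h1, h2⟩ := Nat.mem_divisors.mp he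
    have hn0 : 0 < n := Nat.pos_of_ne_zero h2
    have he0 : 0 < e := Nat.pos_of_dvd_of_pos h1 hn0
    have := Nat.div_pos (Nat.le_of_dvd hn0 h1) he0
    omega
  rw [ArithmeticFunction.zeta_apply_ne hd]
  push_cast
  ring

private lemma value_complex :
    LSeries (fun n : ℕ => (cAux n : ℂ)) 3 = (riemannZeta 2)⁻¹ * riemannZeta 3 ∧
      LSeriesSummable (fun n : ℕ => (cAux n : ℂ)) 3 := by
  have h32 : (1 : ℝ) < (3 : ℂ).re := by norm_num
  have h22 : (1 : ℝ) < (2 : ℂ).re := by norm_num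
  have hmu2 : LSeriesSummable ↗ArithmeticFunction.moebius 2 :=
    ArithmeticFunction.LSeriesSummable_moebius_iff.mpr h22
  have hmu : LSeriesSummable (fun m : ℕ => (ArithmeticFunction.moebius m : ℂ) * m) 3 := by
    unfold LSeriesSummable
    exact hmu2.congr fun n => (term_eq n).symm
  have hz : LSeriesSummable ↗ArithmeticFunction.zeta 3 :=
    ArithmeticFunction.LSeriesSummable_zeta_iff.mpr h32
  constructor
  · rw [conv_eq, LSeries_convolution' hmu hz]
    have hLmu : LSeries (fun m : ℕ => (ArithmeticFunction.moebius m : ℂ) * m) 3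
        = LSeries ↗ArithmeticFunction.moebius 2 := by
      unfold LSeries
      exact tsum_congr term_eq
    rw [hLmu, ArithmeticFunction.LSeries_zeta_eq_riemannZeta h32]
    have h1 := ArithmeticFunction.LSeries_zeta_mul_Lseries_moebius h22
    rw [ArithmeticFunction.LSeries_zeta_eq_riemannZeta h22] at h1
    have hLmu2 : LSeries ↗ArithmeticFunction.moebius 2 = (riemannZeta 2)⁻¹ :=
      eq_inv_of_mul_eq_one_left (by rw [mul_comm]; exact h1)
    rw [hLmu2]
  · rw [conv_eq]
    exact hmu.convolution hz

private lemma value_eq :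
    ∑' m : ℕ, (cAux (m + 1) : ℝ) * (2 / ((m + 1 : ℕ) : ℝ) ^ 3)
      = 12 * (riemannZeta 3).re / π ^ 2 := by
  obtain ⟨hval, hsum⟩ := value_complex
  -- the real series
  set W : ℝ := ∑' m : ℕ, (cAux (m + 1) : ℝ) / ((m + 1 : ℕ) : ℝ) ^ 3 with hW
  have hWc : (W : ℂ) = (riemannZeta 2)⁻¹ * riemannZeta 3 := by
    rw [hW, Complex.ofReal_tsum]
    have hterm : ∀ m : ℕ, ((((cAux (m + 1) : ℝ) / ((m + 1 : ℕ) : ℝ) ^ 3 : ℝ)) : ℂ)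
        = LSeries.term (fun n : ℕ => (cAux n : ℂ)) 3 (m + 1) := by
      intro m
      rw [LSeries.term_of_ne_zero (Nat.succ_ne_zero m)]
      have h3 : (((m + 1 : ℕ) : ℂ)) ^ (3 : ℂ) = ((m + 1 : ℕ) : ℂ) ^ (3 : ℕ) := by
        rw [show (3 : ℂ) = ((3 : ℕ) : ℂ) by norm_num]
        exact Complex.cpow_natCast _ 3
      rw [h3]
      push_cast
      ring
    rw [tsum_congr hterm]
    rw [← hval]
    unfold LSeries
    rw [Summable.tsum_eq_zero_add hsum, LSeries.term_zero, zero_add]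
  -- conclude
  have hW_re : W = ((riemannZeta 2)⁻¹ * riemannZeta 3).re := by
    rw [← hWc, Complex.ofReal_re]
  have hz2 : riemannZeta 2 = (π ^ 2 / 6 : ℝ) := by
    rw [riemannZeta_two]; push_cast; ring
  have hre : ((riemannZeta 2)⁻¹ * riemannZeta 3).re = 6 / π ^ 2 * (riemannZeta 3).re := by
    rw [hz2, ← Complex.ofReal_inv, Complex.re_ofReal_mul, inv_div]
  have hfinal : ∑' m : ℕ, (cAux (m + 1) : ℝ) * (2 / ((m + 1 : ℕ) : ℝ) ^ 3) = 2 * W := by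
    rw [hW, ← tsum_mul_left]
    refine tsum_congr fun m => ?_
    ring
  rw [hfinal, hW_re, hre]
  have hpi : π ≠ 0 := Real.pi_ne_zero
  field_simp
  ring

set_option maxHeartbeats 1000000 in
/-- The expected size `μ₁(x) = x S'(x)/S(x) = ∑_{n≥1} n φ(n) xⁿ/(1-xⁿ)` of the Boltzmann
sampler for NW-convex paths satisfies `μ₁(x) ∼ 12 ζ(3)/(π² (1-x)³)` as `x → 1⁻`. -/
theorem boltzmann_expected_size_asymptotic :
    Tendsto (fun x : ℝ =>
        (∑' n : ℕ, ((n + 1 : ℕ) : ℝ) * (Nat.totient (n + 1) : ℝ) * x ^ (n + 1) /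
          (1 - x ^ (n + 1))) * (1 - x) ^ 3)
      (nhdsWithin 1 (Set.Ioo (0 : ℝ) 1)) (nhds (12 * (riemannZeta 3).re / π ^ 2)) := by
  have key : Tendsto (fun x : ℝ => ∑' m : ℕ, (cAux (m + 1) : ℝ) *
      (x ^ (m + 1) * (1 + x ^ (m + 1)) / (1 - x ^ (m + 1)) ^ 3 * (1 - x) ^ 3))
      (nhdsWithin 1 (Set.Ioo (0 : ℝ) 1)) (nhds (12 * (riemannZeta 3).re / π ^ 2)) := by
    rw [← value_eq]
    refine tendsto_tsum_of_dominated_convergence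
      (f := fun (x : ℝ) (m : ℕ) => (cAux (m + 1) : ℝ) *
        (x ^ (m + 1) * (1 + x ^ (m + 1)) / (1 - x ^ (m + 1)) ^ 3 * (1 - x) ^ 3))
      (g := fun m : ℕ => (cAux (m + 1) : ℝ) * (2 / ((m + 1 : ℕ) : ℝ) ^ 3))
      (bound := fun m : ℕ => 12 / ((m + 1 : ℕ) : ℝ) ^ 2) ?_ ?_ ?_
    · have h2 : Summable (fun n : ℕ => 1 / (n : ℝ) ^ 2) :=
        Real.summable_one_div_nat_pow.mpr (by norm_num)
      have h3 : Summable (fun n : ℕ => 1 / ((n + 1 : ℕ) : ℝ) ^ 2) :=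
        (summable_nat_add_iff 1).mpr h2
      refine (h3.mul_left 12).congr fun m => ?_
      push_cast
      ring
    · intro m
      exact term_tendsto' ((cAux (m + 1) : ℝ)) (by omega : 1 ≤ m + 1)
    · filter_upwards [self_mem_nhdsWithin] with x hx m
      obtain ⟨hx0, hx1⟩ := hx
      have hxk1 : x ^ (m + 1) < 1 := pow_lt_one₀ hx0.le hx1 (by omega)
      have hterm_nonneg : 0 ≤ x ^ (m + 1) * (1 + x ^ (m + 1)) / (1 - x ^ (m + 1)) ^ 3
          * (1 - x) ^ 3 := by
        have h1 : (0:ℝ) < 1 - x ^ (m + 1) := by linarith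
        have h2 : (0:ℝ) ≤ 1 - x := by linarith
        positivity
      rw [Real.norm_eq_abs, abs_mul, abs_of_nonneg hterm_nonneg]
      have hc : |(cAux (m + 1) : ℝ)| ≤ ((m + 1 : ℕ) : ℝ) := by
        rw [← Int.cast_abs]
        exact_mod_cast cAux_bound (m + 1)
      have hd := dom_bound hx0 hx1 (k := m + 1) (by omega)
      have hk : (0:ℝ) < ((m + 1 : ℕ) : ℝ) := by positivity
      calc |(cAux (m + 1) : ℝ)| * (x ^ (m + 1) * (1 + x ^ (m + 1)) / (1 - x ^ (m + 1)) ^ 3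
            * (1 - x) ^ 3)
          ≤ ((m + 1 : ℕ) : ℝ) * (12 / ((m + 1 : ℕ) : ℝ) ^ 3) :=
            mul_le_mul hc hd hterm_nonneg hk.le
        _ = 12 / ((m + 1 : ℕ) : ℝ) ^ 2 := by
            field_simp
  apply key.congr'
  filter_upwards [self_mem_nhdsWithin] with x hx
  exact (rewrite_T hx.1 hx.2).symm
end

section
/- The Boltzmann distribution of NW-convex paths is bumpy: with μ₁(x) = ∑_{n≥1} n·φ(n)·xⁿ/(1−xⁿ) and σ(x) = ( ∑_{n≥1} n²·φ(n)·xⁿ/(1−xⁿ)² )^{1/2}, one has μ₁(x) → ∞ and σ(x)/μ₁(x) → 0 as x → 1⁻ (x real, 0 < x < 1). -/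
open Real Filter

lemma prime_le_sq_pred {p : ℕ} (hp : p.Prime) (h2 : p ≠ 2) : p ≤ (p - 1) ^ 2 := by
  have h3 : 3 ≤ p := by
    rcases hp.two_le.lt_or_eq with h | h
    · omega
    · omega
  have h1 : 2 ≤ p - 1 := by omega
  calc p = (p - 1) + 1 := by omega
    _ ≤ (p - 1) + (p - 1) := by omega
    _ = 2 * (p - 1) := by ring
    _ ≤ (p - 1) * (p - 1) := Nat.mul_le_mul_right _ h1
    _ = (p - 1) ^ 2 := (sq _).symm

lemma le_two_mul_totient_sq (n : ℕ) : n ≤ 2 * Nat.totient n ^ 2 := by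
  rcases Nat.eq_zero_or_pos n with rfl | hn
  · simp
  have h := Nat.totient_mul_prod_primeFactors n
  set P := ∏ p ∈ n.primeFactors, p with hP
  set Q := ∏ p ∈ n.primeFactors, (p - 1) with hQ
  have hPn : P ∣ n := Nat.prod_primeFactors_dvd n
  have hPpos : 0 < P := Finset.prod_pos fun p hp => (Nat.prime_of_mem_primeFactors hp).pos
  have hPQ : P ≤ 2 * Q ^ 2 := by
    rw [hP, hQ, ← Finset.prod_pow]
    by_cases h2 : 2 ∈ n.primeFactors
    · rw [← Finset.mul_prod_erase _ _ h2, ← Finset.mul_prod_erase _ (fun p => (p - 1) ^ 2) h2]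
      norm_num
      refine Finset.prod_le_prod' fun p hp => ?_
      exact prime_le_sq_pred (Nat.prime_of_mem_primeFactors (Finset.mem_of_mem_erase hp))
        (Finset.ne_of_mem_erase hp)
    · calc P ≤ ∏ p ∈ n.primeFactors, (p - 1) ^ 2 := by
            rw [hP]
            refine Finset.prod_le_prod' fun p hp => ?_
            exact prime_le_sq_pred (Nat.prime_of_mem_primeFactors hp) (fun e => h2 (e ▸ hp))
        _ ≤ 2 * ∏ p ∈ n.primeFactors, (p - 1) ^ 2 := by omega
  have hsq : Nat.totient n ^ 2 * P ^ 2 = n ^ 2 * Q ^ 2 := by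
    rw [← mul_pow, ← mul_pow, h]
  have hPlen : P ≤ n := Nat.le_of_dvd hn hPn
  have key : n * P ^ 2 ≤ 2 * Nat.totient n ^ 2 * P ^ 2 := by
    calc n * P ^ 2 = n * P * P := by ring
      _ ≤ n * (2 * Q ^ 2) * n := by
          exact Nat.mul_le_mul (Nat.mul_le_mul_left _ hPQ) hPlen
      _ = 2 * (n ^ 2 * Q ^ 2) := by ring
      _ = 2 * Nat.totient n ^ 2 * P ^ 2 := by rw [← hsq]; ring
  exact Nat.le_of_mul_le_mul_right key (by positivity)

lemma k_pow_le {z : ℝ} (hz0 : 0 ≤ z) (hz1 : z < 1) (k : ℕ) : (k : ℝ) * z ^ k ≤ 1 / (1 - z) := by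
  have ht : 0 < 1 - z := by linarith
  have hz_exp : z ≤ Real.exp (z - 1) := by
    have := Real.add_one_le_exp (z - 1); linarith
  have h1 : z ^ k ≤ Real.exp (-(k * (1 - z))) := by
    calc z ^ k ≤ (Real.exp (z - 1)) ^ k := pow_le_pow_left₀ hz0 hz_exp k
      _ = Real.exp (k * (z - 1)) := by rw [← Real.exp_nat_mul]
      _ = Real.exp (-(k * (1 - z))) := by ring_nf
  set u : ℝ := k * (1 - z) with hu
  have hu0 : 0 ≤ u := by positivity
  have h2 : u * Real.exp (-u) ≤ 1 := by
    rw [Real.exp_neg]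
    rw [mul_inv_le_iff₀ (Real.exp_pos u), one_mul]
    have := Real.add_one_le_exp u; linarith
  calc (k : ℝ) * z ^ k ≤ (k : ℝ) * Real.exp (-u) := by
        exact mul_le_mul_of_nonneg_left h1 (Nat.cast_nonneg k)
    _ = u * Real.exp (-u) / (1 - z) := by rw [hu]; field_simp
    _ ≤ 1 / (1 - z) := div_le_div_of_nonneg_right h2 ht.le

lemma summable_shift (k : ℕ) {z : ℝ} (hz0 : 0 ≤ z) (hz1 : z < 1) :
    Summable (fun n : ℕ => ((n : ℝ) + 1) ^ k * z ^ (n + 1)) := by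
  have h : Summable (fun n : ℕ => (n : ℝ) ^ k * z ^ n) := by
    simpa using summable_pow_mul_geometric_of_norm_lt_one (R := ℝ) k (r := z)
      (by rwa [Real.norm_eq_abs, abs_of_nonneg hz0])
  have := h.comp_injective Nat.succ_injective
  refine this.congr fun n => ?_
  simp only [Function.comp, Nat.succ_eq_add_one]
  push_cast
  ring

lemma sumS1 {z : ℝ} (hz0 : 0 ≤ z) (hz1 : z < 1) :
    ∑' n : ℕ, ((n : ℝ) + 1) * z ^ (n + 1) ≤ 1 / (1 - z) ^ 2 := by
  have hnorm : ‖z‖ < 1 := by rwa [Real.norm_eq_abs, abs_of_nonneg hz0]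
  have h1 : Summable (fun n : ℕ => (n : ℝ) * z ^ n) :=
    by simpa using summable_pow_mul_geometric_of_norm_lt_one (R := ℝ) 1 hnorm
  have h2 : Summable (fun n : ℕ => z ^ n) := summable_geometric_of_lt_one hz0 hz1
  have ht : 0 < 1 - z := by linarith
  have key : ∑' n : ℕ, ((n : ℝ) + 1) * z ^ (n + 1)
      = z * ((∑' n : ℕ, (n : ℝ) * z ^ n) + ∑' n : ℕ, z ^ n) := by
    rw [← Summable.tsum_add h1 h2, ← tsum_mul_left]
    refine tsum_congr fun n => ?_
    ring
  rw [key, tsum_coe_mul_geometric_of_norm_lt_one hnorm, tsum_geometric_of_lt_one hz0 hz1]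
  have heq : z / (1 - z) ^ 2 + (1 - z)⁻¹ = 1 / (1 - z) ^ 2 := by
    field_simp
    ring
  rw [heq]
  have h01 : 0 ≤ 1 / (1 - z) ^ 2 := by positivity
  nlinarith


lemma sumS1' {z : ℝ} (hz0 : 0 ≤ z) (hz1 : z < 1) :
    ∑' n : ℕ, ((n : ℝ) + 1) ^ 1 * z ^ (n + 1) ≤ 1 / (1 - z) ^ 2 := by
  simpa using sumS1 hz0 hz1

lemma S2_le {x : ℝ} (hx0 : 0 < x) (hx1 : x < 1) :
    ∑' n : ℕ, ((n : ℝ) + 1) ^ 2 * x ^ (n + 1) ≤ 8 / (1 - x) ^ 3 := by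
  set z := Real.sqrt x with hz
  have hz0 : 0 ≤ z := Real.sqrt_nonneg x
  have hz1 : z < 1 := by
    rw [hz, show (1:ℝ) = Real.sqrt 1 by simp]
    exact Real.sqrt_lt_sqrt hx0.le hx1
  have hzz : z * z = x := Real.mul_self_sqrt hx0.le
  have htz : 1 - x ≤ 2 * (1 - z) := by nlinarith
  have ht : 0 < 1 - x := by linarith
  have htz0 : 0 < 1 - z := by linarith
  have hpt : ∀ n : ℕ, ((n : ℝ) + 1) ^ 2 * x ^ (n + 1)
      ≤ (1 / (1 - z)) * (((n : ℝ) + 1) * z ^ (n + 1)) := by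
    intro n
    have hx_eq : x ^ (n + 1) = z ^ (n + 1) * z ^ (n + 1) := by
      rw [← hzz]; ring
    have hk := k_pow_le hz0 hz1 (n + 1)
    push_cast at hk
    calc ((n : ℝ) + 1) ^ 2 * x ^ (n + 1)
        = (((n : ℝ) + 1) * z ^ (n + 1)) * (((n : ℝ) + 1) * z ^ (n + 1)) := by
          rw [hx_eq]; ring
      _ ≤ (1 / (1 - z)) * (((n : ℝ) + 1) * z ^ (n + 1)) := by
          apply mul_le_mul_of_nonneg_right hk (by positivity)
  have hsum2 := summable_shift 2 hx0.le hx1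
  have hsum1 := (summable_shift 1 hz0 hz1).mul_left (1 / (1 - z))
  calc ∑' n : ℕ, ((n : ℝ) + 1) ^ 2 * x ^ (n + 1)
      ≤ ∑' n : ℕ, (1 / (1 - z)) * (((n : ℝ) + 1) ^ 1 * z ^ (n + 1)) := by
        refine Summable.tsum_le_tsum (fun n => by simpa using hpt n) hsum2 (by simpa using hsum1)
    _ = (1 / (1 - z)) * ∑' n : ℕ, ((n : ℝ) + 1) ^ 1 * z ^ (n + 1) := tsum_mul_left
    _ ≤ (1 / (1 - z)) * (1 / (1 - z) ^ 2) := by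
        apply mul_le_mul_of_nonneg_left (sumS1' hz0 hz1) (by positivity)
    _ = 1 / (1 - z) ^ 3 := by field_simp
    _ ≤ 8 / (1 - x) ^ 3 := by
        rw [div_le_div_iff₀ (by positivity) (by positivity)]
        nlinarith [pow_le_pow_left₀ ht.le htz 3]

lemma S3_le {x : ℝ} (hx0 : 0 < x) (hx1 : x < 1) :
    ∑' n : ℕ, ((n : ℝ) + 1) ^ 3 * x ^ (n + 1) ≤ 64 / (1 - x) ^ 4 := by
  set z := Real.sqrt x with hz
  have hz0' : 0 < z := Real.sqrt_pos.mpr hx0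
  have hz0 : 0 ≤ z := hz0'.le
  have hz1 : z < 1 := by
    rw [hz, show (1:ℝ) = Real.sqrt 1 by simp]
    exact Real.sqrt_lt_sqrt hx0.le hx1
  have hzz : z * z = x := Real.mul_self_sqrt hx0.le
  set y := Real.sqrt z with hy
  have hy0 : 0 ≤ y := Real.sqrt_nonneg z
  have hy1 : y < 1 := by
    rw [hy, show (1:ℝ) = Real.sqrt 1 by simp]
    exact Real.sqrt_lt_sqrt hz0 hz1
  have hyy : y * y = z := Real.mul_self_sqrt hz0
  have ht : 0 < 1 - x := by linarith
  have hty0 : 0 < 1 - y := by linarith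
  have htz0 : 0 < 1 - z := by nlinarith
  have hty : 1 - x ≤ 4 * (1 - y) := by nlinarith
  have htzx : 1 - x ≤ 2 * (1 - z) := by nlinarith
  have hpt : ∀ n : ℕ, ((n : ℝ) + 1) ^ 3 * x ^ (n + 1)
      ≤ (1 / (1 - y)) ^ 2 * (((n : ℝ) + 1) * z ^ (n + 1)) := by
    intro n
    have hx_eq : x ^ (n + 1) = (y ^ (n + 1) * y ^ (n + 1)) * z ^ (n + 1) := by
      rw [← hzz, ← hyy]; ring
    have hk := k_pow_le hy0 hy1 (n + 1)
    push_cast at hk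
    have hkn : (0:ℝ) ≤ ((n : ℝ) + 1) * y ^ (n + 1) := by positivity
    calc ((n : ℝ) + 1) ^ 3 * x ^ (n + 1)
        = (((n : ℝ) + 1) * y ^ (n + 1)) * ((((n : ℝ) + 1) * y ^ (n + 1))
            * (((n : ℝ) + 1) * z ^ (n + 1))) := by rw [hx_eq]; ring
      _ ≤ (1 / (1 - y)) * ((1 / (1 - y)) * (((n : ℝ) + 1) * z ^ (n + 1))) := by
          have h1 : (((n : ℝ) + 1) * y ^ (n + 1)) * (((n : ℝ) + 1) * z ^ (n + 1))
              ≤ (1 / (1 - y)) * (((n : ℝ) + 1) * z ^ (n + 1)) :=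
            mul_le_mul_of_nonneg_right hk (by positivity)
          calc (((n : ℝ) + 1) * y ^ (n + 1)) * ((((n : ℝ) + 1) * y ^ (n + 1))
                * (((n : ℝ) + 1) * z ^ (n + 1)))
              ≤ (((n : ℝ) + 1) * y ^ (n + 1)) * ((1 / (1 - y)) * (((n : ℝ) + 1) * z ^ (n + 1))) := by
                refine mul_le_mul_of_nonneg_left ?_ hkn
                calc (((n : ℝ) + 1) * y ^ (n + 1)) * (((n : ℝ) + 1) * z ^ (n + 1))
                    ≤ (1 / (1 - y)) * (((n : ℝ) + 1) * z ^ (n + 1)) := h1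
                  _ = (1 / (1 - y)) * (((n : ℝ) + 1) * z ^ (n + 1)) := rfl
            _ ≤ (1 / (1 - y)) * ((1 / (1 - y)) * (((n : ℝ) + 1) * z ^ (n + 1))) := by
                refine mul_le_mul_of_nonneg_right hk (by positivity)
      _ = (1 / (1 - y)) ^ 2 * (((n : ℝ) + 1) * z ^ (n + 1)) := by ring
  have hsum3 := summable_shift 3 hx0.le hx1
  have hsum1 := (summable_shift 1 hz0 hz1).mul_left ((1 / (1 - y)) ^ 2)
  calc ∑' n : ℕ, ((n : ℝ) + 1) ^ 3 * x ^ (n + 1)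
      ≤ ∑' n : ℕ, (1 / (1 - y)) ^ 2 * (((n : ℝ) + 1) ^ 1 * z ^ (n + 1)) := by
        refine Summable.tsum_le_tsum (fun n => by simpa using hpt n) hsum3 (by simpa using hsum1)
    _ = (1 / (1 - y)) ^ 2 * ∑' n : ℕ, ((n : ℝ) + 1) ^ 1 * z ^ (n + 1) := tsum_mul_left
    _ ≤ (1 / (1 - y)) ^ 2 * (1 / (1 - z) ^ 2) := by
        apply mul_le_mul_of_nonneg_left (sumS1' hz0 hz1) (by positivity)
    _ ≤ 64 / (1 - x) ^ 4 := by
        rw [div_pow, one_pow, div_mul_div_comm, one_mul, div_le_div_iff₀ (by positivity) (by positivity)]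
        calc 1 * (1 - x) ^ 4 = ((1-x)*(1-x))*((1-x)*(1-x)) := by ring
          _ ≤ (4*(1-y)*(4*(1-y))) * (2*(1-z)*(2*(1-z))) := by
              apply mul_le_mul (by nlinarith) (by nlinarith) (by positivity) (by positivity)
          _ = 64 * ((1 - y) ^ 2 * (1 - z) ^ 2) := by ring


lemma geom_lb {x : ℝ} (hx0 : 0 < x) (hx1 : x < 1) (k : ℕ) :
    (k : ℝ) * (1 - x) * x ^ k ≤ 1 - x ^ k := by
  have hs : (1 - x) * ∑ i ∈ Finset.range k, x ^ i = 1 - x ^ k := by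
    have := geom_sum_mul x k
    nlinarith [this]
  have hsum : (k : ℝ) * x ^ k ≤ ∑ i ∈ Finset.range k, x ^ i := by
    have := Finset.card_nsmul_le_sum (Finset.range k) (fun i => x ^ i) (x ^ k)
      (fun i hi => pow_le_pow_of_le_one hx0.le hx1.le (Finset.mem_range.mp hi).le)
    simpa [nsmul_eq_mul] using this
  calc (k : ℝ) * (1 - x) * x ^ k = (1 - x) * ((k : ℝ) * x ^ k) := by ring
    _ ≤ (1 - x) * ∑ i ∈ Finset.range k, x ^ i :=
        mul_le_mul_of_nonneg_left hsum (by linarith)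
    _ = 1 - x ^ k := hs

lemma inv_one_sub_pow_le {x : ℝ} (hx0 : 0 < x) (hx1 : x < 1) (n : ℕ) :
    (1 - x ^ (n + 1))⁻¹ ≤ (((n : ℝ) + 1) * (1 - x) + 1) / (((n : ℝ) + 1) * (1 - x)) := by
  have hxk : x ^ (n + 1) < 1 := pow_lt_one₀ hx0.le hx1 (Nat.succ_ne_zero n)
  have hxk0 : 0 < x ^ (n + 1) := pow_pos hx0 _
  have hkt : (0 : ℝ) < ((n : ℝ) + 1) * (1 - x) := by
    have : (0:ℝ) < 1 - x := by linarith
    positivity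
  rw [inv_eq_one_div, div_le_div_iff₀ (by linarith) hkt]
  have hg := geom_lb hx0 hx1 (n + 1)
  push_cast at hg
  nlinarith [hg]

lemma sigma_sq_le {x : ℝ} (hx0 : 0 < x) (hx1 : x < 1) :
    ∑' n : ℕ, ((n + 1 : ℕ) : ℝ) ^ 2 * (Nat.totient (n + 1) : ℝ) * x ^ (n + 1) / (1 - x ^ (n + 1)) ^ 2
      ≤ 81 / (1 - x) ^ 4 := by
  have ht : (0:ℝ) < 1 - x := by linarith
  set g := fun n : ℕ => ((n + 1 : ℕ) : ℝ) ^ 2 * (Nat.totient (n + 1) : ℝ) * x ^ (n + 1) / (1 - x ^ (n + 1)) ^ 2 with hg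
  set h := fun n : ℕ => (1/(1-x)^2) * (((n : ℝ) + 1) ^ 1 * x ^ (n + 1))
      + ((2/(1-x)) * (((n : ℝ) + 1) ^ 2 * x ^ (n + 1)) + ((n : ℝ) + 1) ^ 3 * x ^ (n + 1)) with hh
  have hgh : ∀ n, g n ≤ h n := by
    intro n
    have hxk : x ^ (n + 1) < 1 := pow_lt_one₀ hx0.le hx1 (Nat.succ_ne_zero n)
    have hkt : (0 : ℝ) < ((n : ℝ) + 1) * (1 - x) := by positivity
    have hinv := inv_one_sub_pow_le hx0 hx1 n
    have hinv0 : 0 ≤ (1 - x ^ (n + 1))⁻¹ := by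
      rw [inv_nonneg]; linarith
    have hphi : (Nat.totient (n + 1) : ℝ) ≤ (n : ℝ) + 1 := by
      have := Nat.totient_le (n + 1)
      exact_mod_cast this
    have step1 : g n = (((n:ℝ)+1) ^ 2 * (Nat.totient (n + 1) : ℝ) * x ^ (n + 1)) * ((1 - x ^ (n + 1))⁻¹) ^ 2 := by
      rw [hg]
      push_cast
      rw [div_eq_mul_inv, inv_pow]
    have step2 : (((n:ℝ)+1) ^ 2 * (Nat.totient (n + 1) : ℝ) * x ^ (n + 1)) * ((1 - x ^ (n + 1))⁻¹) ^ 2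
        ≤ (((n:ℝ)+1) ^ 3 * x ^ (n + 1)) * ((((n : ℝ) + 1) * (1 - x) + 1) / (((n : ℝ) + 1) * (1 - x))) ^ 2 := by
      apply mul_le_mul
      · calc ((n:ℝ)+1) ^ 2 * (Nat.totient (n + 1) : ℝ) * x ^ (n + 1)
            ≤ ((n:ℝ)+1) ^ 2 * ((n:ℝ)+1) * x ^ (n + 1) := by
              apply mul_le_mul_of_nonneg_right (mul_le_mul_of_nonneg_left hphi (by positivity)) (by positivity)
          _ = ((n:ℝ)+1) ^ 3 * x ^ (n + 1) := by ring
      · exact pow_le_pow_left₀ hinv0 hinv 2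
      · positivity
      · positivity
    have step3 : (((n:ℝ)+1) ^ 3 * x ^ (n + 1)) * ((((n : ℝ) + 1) * (1 - x) + 1) / (((n : ℝ) + 1) * (1 - x))) ^ 2 = h n := by
      rw [hh]
      have hn0 : ((n:ℝ)+1) ≠ 0 := by positivity
      field_simp
      ring
    rw [step1, ← step3]
    exact step2
  have hA := (summable_shift 1 hx0.le hx1).mul_left (1/(1-x)^2)
  have hB := (summable_shift 2 hx0.le hx1).mul_left (2/(1-x))
  have hC := summable_shift 3 hx0.le hx1
  have hhsum : Summable h := hA.add (hB.add hC)
  have hg0 : ∀ n, 0 ≤ g n := by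
    intro n
    apply div_nonneg _ (sq_nonneg _)
    positivity
  have hgsum : Summable g := Summable.of_nonneg_of_le hg0 hgh hhsum
  have htsum : ∑' n, g n ≤ ∑' n, h n := Summable.tsum_le_tsum hgh hgsum hhsum
  have hsplit : ∑' n, h n = (1/(1-x)^2) * (∑' n : ℕ, ((n : ℝ) + 1) ^ 1 * x ^ (n + 1))
      + ((2/(1-x)) * (∑' n : ℕ, ((n : ℝ) + 1) ^ 2 * x ^ (n + 1))
        + ∑' n : ℕ, ((n : ℝ) + 1) ^ 3 * x ^ (n + 1)) := by
    rw [hh, Summable.tsum_add hA (hB.add hC), Summable.tsum_add hB hC, tsum_mul_left, tsum_mul_left]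
  have hS1 := sumS1' hx0.le hx1
  have hS2 := S2_le hx0 hx1
  have hS3 := S3_le hx0 hx1
  calc ∑' n, g n ≤ ∑' n, h n := htsum
    _ ≤ (1/(1-x)^2) * (1 / (1-x)^2) + ((2/(1-x)) * (8 / (1-x)^3) + 64 / (1-x)^4) := by
        rw [hsplit]
        gcongr
    _ = 81 / (1 - x) ^ 4 := by field_simp; ring


lemma sum_range_add_one (N : ℕ) : ∑ n ∈ Finset.range N, ((n : ℝ) + 1) = N * (N + 1) / 2 := by
  induction N with
  | zero => simp
  | succ k ih => rw [Finset.sum_range_succ, ih]; push_cast; ring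

lemma summable_mu {x : ℝ} (hx0 : 0 < x) (hx1 : x < 1) :
    Summable (fun n : ℕ =>
      ((n + 1 : ℕ) : ℝ) * (Nat.totient (n + 1) : ℝ) * x ^ (n + 1) / (1 - x ^ (n + 1))) := by
  have ht : (0:ℝ) < 1 - x := by linarith
  have hg : Summable (fun n : ℕ => (1/(1-x)) * (((n : ℝ) + 1) ^ 2 * x ^ (n + 1))) :=
    (summable_shift 2 hx0.le hx1).mul_left (1/(1-x))
  apply Summable.of_nonneg_of_le _ _ hg
  · intro n
    have hxk : x ^ (n + 1) < 1 := pow_lt_one₀ hx0.le hx1 (Nat.succ_ne_zero n)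
    apply div_nonneg _ (by linarith)
    positivity
  · intro n
    have hxk : x ^ (n + 1) ≤ x := by
      calc x ^ (n + 1) ≤ x ^ 1 := pow_le_pow_of_le_one hx0.le hx1.le (by omega)
        _ = x := pow_one x
    have hden : 1 - x ≤ 1 - x ^ (n + 1) := by linarith
    have hphi : (Nat.totient (n + 1) : ℝ) ≤ (n : ℝ) + 1 := by
      exact_mod_cast Nat.totient_le (n + 1)
    have hnum : ((n + 1 : ℕ) : ℝ) * (Nat.totient (n + 1) : ℝ) * x ^ (n + 1)
        ≤ ((n : ℝ) + 1) ^ 2 * x ^ (n + 1) := by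
      push_cast
      have hp : (0:ℝ) < x ^ (n+1) := pow_pos hx0 _
      have h0 : (0:ℝ) ≤ (n:ℝ)+1 := by positivity
      have h1 := mul_le_mul_of_nonneg_right (mul_le_mul_of_nonneg_left hphi h0) hp.le
      calc ((n:ℝ)+1) * (Nat.totient (n+1) : ℝ) * x ^ (n+1)
          ≤ ((n:ℝ)+1) * ((n:ℝ)+1) * x ^ (n+1) := h1
        _ = ((n:ℝ)+1)^2 * x^(n+1) := by ring
    calc ((n + 1 : ℕ) : ℝ) * (Nat.totient (n + 1) : ℝ) * x ^ (n + 1) / (1 - x ^ (n + 1))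
        ≤ (((n : ℝ) + 1) ^ 2 * x ^ (n + 1)) / (1 - x) := by
          apply div_le_div₀ (by positivity) hnum ht hden
      _ = (1/(1-x)) * (((n : ℝ) + 1) ^ 2 * x ^ (n + 1)) := by ring

set_option maxHeartbeats 1000000 in
lemma mu_lb {x : ℝ} (h34 : 3/4 ≤ x) (hx1 : x < 1) :
    1 / (64 * (1 - x) ^ 2 * Real.sqrt (1 - x))
      ≤ ∑' n : ℕ, ((n + 1 : ℕ) : ℝ) * (Nat.totient (n + 1) : ℝ) * x ^ (n + 1) / (1 - x ^ (n + 1)) := by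
  have hx0 : (0:ℝ) < x := by linarith
  obtain ⟨t, htdef⟩ : ∃ t : ℝ, t = 1 - x := ⟨_, rfl⟩
  rw [show (1:ℝ) - x = t from htdef.symm]
  have hxt : x = 1 - t := by rw [htdef]; ring
  have ht0 : 0 < t := by rw [htdef]; linarith
  have ht4 : t ≤ 1/4 := by rw [htdef]; linarith
  obtain ⟨N, hNdef⟩ : ∃ N : ℕ, N = ⌊1/(2*t)⌋₊ := ⟨_, rfl⟩
  have hNu : (N : ℝ) ≤ 1/(2*t) := hNdef ▸ Nat.floor_le (by positivity)
  have hu2 : (2:ℝ) ≤ 1/(2*t) := by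
    rw [le_div_iff₀ (by positivity)]; linarith
  have hN2 : 2 ≤ N := hNdef ▸ Nat.le_floor (by exact_mod_cast hu2)
  have hN0 : 0 < N := by omega
  have hNl : 1/(4*t) ≤ (N : ℝ) := by
    have h1 : 1/(2*t) - 1 < (N:ℝ) := hNdef ▸ Nat.sub_one_lt_floor (1/(2*t))
    have h2 : 1/(2*t) = 1/(4*t) + 1/(4*t) := by field_simp; ring
    have h3 : (1:ℝ) ≤ 1/(4*t) := by rw [le_div_iff₀ (by positivity)]; linarith
    linarith
  have hNt : (N : ℝ) * t ≤ 1/2 := by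
    have h := mul_le_mul_of_nonneg_right hNu ht0.le
    have h2 : 1/(2*t) * t = 1/2 := by field_simp; try ring
    linarith
  have hxN : (1:ℝ)/2 ≤ x ^ N := by
    have hb := one_add_mul_le_pow (a := -t) (by linarith) N
    have hx_eq : (1 + -t) = x := by rw [hxt]; ring
    rw [hx_eq] at hb
    have : (1:ℝ) + (N:ℝ) * (-t) = 1 - (N:ℝ)*t := by ring
    rw [this] at hb
    linarith
  have hterm : ∀ n ∈ Finset.range N,
      (Nat.totient (n+1) : ℝ) * (1/(2*t))
        ≤ ((n + 1 : ℕ) : ℝ) * (Nat.totient (n + 1) : ℝ) * x ^ (n + 1) / (1 - x ^ (n + 1)) := by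
    intro n hn
    have hnN : n + 1 ≤ N := Finset.mem_range.mp hn
    have hxk1 : x ^ (n+1) < 1 := pow_lt_one₀ hx0.le hx1 (Nat.succ_ne_zero n)
    have hden : 1 - x ^ (n+1) ≤ ((n:ℝ)+1) * t := by
      have hb := one_add_mul_le_pow (a := -t) (by linarith) (n+1)
      have hx_eq : (1 + -t) = x := by rw [hxt]; ring
      rw [hx_eq] at hb
      push_cast at hb ⊢
      linarith
    have hxk : (1:ℝ)/2 ≤ x ^ (n+1) := by
      calc (1:ℝ)/2 ≤ x ^ N := hxN
        _ ≤ x ^ (n+1) := pow_le_pow_of_le_one hx0.le hx1.le hnN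
    have hnum : ((n:ℝ)+1) * (Nat.totient (n+1) : ℝ) * (1/2)
        ≤ ((n + 1 : ℕ) : ℝ) * (Nat.totient (n + 1) : ℝ) * x ^ (n + 1) := by
      push_cast
      have h1 : (0:ℝ) ≤ ((n:ℝ)+1) * (Nat.totient (n+1) : ℝ) := by positivity
      nlinarith
    have hstep : ((n:ℝ)+1) * (Nat.totient (n+1) : ℝ) * (1/2) / (((n:ℝ)+1) * t)
        ≤ ((n + 1 : ℕ) : ℝ) * (Nat.totient (n + 1) : ℝ) * x ^ (n + 1) / (1 - x ^ (n + 1)) := by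
      apply div_le_div₀ _ hnum (by linarith) hden
      positivity
    refine le_trans (le_of_eq ?_) hstep
    have hn0 : ((n:ℝ)+1) ≠ 0 := by positivity
    field_simp
  have hphi_lb : ∀ n ∈ Finset.range N,
      ((n:ℝ)+1) / Real.sqrt (2*N) ≤ (Nat.totient (n+1) : ℝ) := by
    intro n hn
    have hnN : n + 1 ≤ N := Finset.mem_range.mp hn
    have hkey : ((n:ℝ)+1) ≤ 2 * (Nat.totient (n+1) : ℝ)^2 := by
      exact_mod_cast le_two_mul_totient_sq (n+1)
    have hnNr : ((n:ℝ)+1) ≤ (N:ℝ) := by exact_mod_cast hnN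
    have hstep : ((n:ℝ)+1) ≤ (Nat.totient (n+1) : ℝ) * Real.sqrt (2*N) := by
      have h1 : ((n:ℝ)+1) = Real.sqrt (((n:ℝ)+1)^2) := (Real.sqrt_sq (by positivity)).symm
      rw [h1]
      calc Real.sqrt (((n:ℝ)+1)^2) ≤ Real.sqrt ((Nat.totient (n+1) : ℝ)^2 * (2*N)) := by
            apply Real.sqrt_le_sqrt; nlinarith
        _ = (Nat.totient (n+1) : ℝ) * Real.sqrt (2*N) := by
            rw [Real.sqrt_mul (by positivity), Real.sqrt_sq (by positivity)]
    rw [div_le_iff₀ (by positivity)]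
    exact hstep
  have hsum_phi : (N:ℝ) * ((N:ℝ)+1) / 2 / Real.sqrt (2*N)
      ≤ ∑ n ∈ Finset.range N, (Nat.totient (n+1) : ℝ) := by
    calc (N:ℝ) * ((N:ℝ)+1) / 2 / Real.sqrt (2*N)
        = ∑ n ∈ Finset.range N, (((n:ℝ)+1) / Real.sqrt (2*N)) := by
          rw [← Finset.sum_div, sum_range_add_one]
      _ ≤ _ := Finset.sum_le_sum hphi_lb
  have hsummu := summable_mu hx0 hx1
  have hnn : ∀ n : ℕ, 0 ≤ ((n + 1 : ℕ) : ℝ) * (Nat.totient (n + 1) : ℝ) * x ^ (n + 1) / (1 - x ^ (n + 1)) := by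
    intro n
    have hxk1 : x ^ (n+1) < 1 := pow_lt_one₀ hx0.le hx1 (Nat.succ_ne_zero n)
    apply div_nonneg _ (by linarith)
    positivity
  have hfin : ∑ n ∈ Finset.range N, ((n + 1 : ℕ) : ℝ) * (Nat.totient (n + 1) : ℝ) * x ^ (n + 1) / (1 - x ^ (n + 1))
      ≤ ∑' n : ℕ, ((n + 1 : ℕ) : ℝ) * (Nat.totient (n + 1) : ℝ) * x ^ (n + 1) / (1 - x ^ (n + 1)) :=
    Summable.sum_le_tsum _ (fun n _ => hnn n) hsummu
  have hmid : ((N:ℝ) * ((N:ℝ)+1) / 2 / Real.sqrt (2*N)) * (1/(2*t))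
      ≤ ∑ n ∈ Finset.range N, ((n + 1 : ℕ) : ℝ) * (Nat.totient (n + 1) : ℝ) * x ^ (n + 1) / (1 - x ^ (n + 1)) := by
    calc ((N:ℝ) * ((N:ℝ)+1) / 2 / Real.sqrt (2*N)) * (1/(2*t))
        ≤ (∑ n ∈ Finset.range N, (Nat.totient (n+1) : ℝ)) * (1/(2*t)) := by
          apply mul_le_mul_of_nonneg_right hsum_phi (by positivity)
      _ = ∑ n ∈ Finset.range N, (Nat.totient (n+1) : ℝ) * (1/(2*t)) := by
          rw [Finset.sum_mul]
      _ ≤ _ := Finset.sum_le_sum hterm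
  refine le_trans ?_ (le_trans hmid hfin)
  -- numeric endgame
  have hst : 0 < Real.sqrt t := Real.sqrt_pos.mpr ht0
  have hts : Real.sqrt t * Real.sqrt t = t := Real.mul_self_sqrt ht0.le
  have h2N : Real.sqrt (2*N) ≤ 1 / Real.sqrt t := by
    have h1 : (2:ℝ)*N ≤ 1/t := by
      have : (2:ℝ) * (1/(2*t)) = 1/t := by field_simp; try ring
      linarith
    calc Real.sqrt (2*N) ≤ Real.sqrt (1/t) := Real.sqrt_le_sqrt h1
      _ = 1 / Real.sqrt t := by rw [one_div, Real.sqrt_inv, one_div]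
  have hs2N : 0 < Real.sqrt (2*N) := Real.sqrt_pos.mpr (by positivity)
  have hNN : 1/(4*t) * (1/(4*t)) ≤ (N:ℝ)*(N:ℝ) :=
    mul_le_mul hNl hNl (by positivity) (Nat.cast_nonneg N)
  have hA : 1/(32*t^2) ≤ (N:ℝ)*((N:ℝ)+1)/2 := by
    have e : 1/(4*t) * (1/(4*t)) = 1/(16*t^2) := by field_simp; try ring
    rw [e] at hNN
    have e2 : 1/(16*t^2) = 2*(1/(32*t^2)) := by field_simp; try ring
    nlinarith [Nat.cast_nonneg (α := ℝ) N, e2]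
  have hB : Real.sqrt t / (32*t^2) ≤ ((N:ℝ)*((N:ℝ)+1)/2) / Real.sqrt (2*N) := by
    have hst' : Real.sqrt t ≠ 0 := ne_of_gt hst
    have e : Real.sqrt t / (32*t^2) = (1/(32*t^2)) / (1/Real.sqrt t) := by
      field_simp
    rw [e]
    exact div_le_div₀ (by positivity) hA hs2N h2N
  calc 1 / (64 * t^2 * Real.sqrt t)
      = Real.sqrt t / (32*t^2) * (1/(2*t)) := by
        have e3 : Real.sqrt t / (32*t^2) * (1/(2*t)) = Real.sqrt t / (64*t^3) := by
          rw [div_mul_div_comm, mul_one]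
          ring_nf
        rw [e3, div_eq_div_iff (by positivity) (by positivity)]
        linear_combination (-64*t^2) * hts
    _ ≤ ((N:ℝ)*((N:ℝ)+1)/2) / Real.sqrt (2*N) * (1/(2*t)) :=
        mul_le_mul_of_nonneg_right hB (by positivity)

/-- The expected size `μ₁(x) = ∑_{n≥1} n φ(n) xⁿ/(1-xⁿ)` of the Boltzmann sampler for
NW-convex paths. -/
noncomputable def muNW (x : ℝ) : ℝ :=
  ∑' n : ℕ, ((n + 1 : ℕ) : ℝ) * (Nat.totient (n + 1) : ℝ) * x ^ (n + 1) / (1 - x ^ (n + 1))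

/-- The standard deviation `σ(x) = (∑_{n≥1} n² φ(n) xⁿ/(1-xⁿ)²)^{1/2}` of the size of the
Boltzmann output for NW-convex paths. -/
noncomputable def sigmaNW (x : ℝ) : ℝ :=
  Real.sqrt (∑' n : ℕ,
    ((n + 1 : ℕ) : ℝ) ^ 2 * (Nat.totient (n + 1) : ℝ) * x ^ (n + 1) / (1 - x ^ (n + 1)) ^ 2)

/-- The Boltzmann distribution of NW-convex paths is bumpy: `μ₁(x) → ∞` and
`σ(x)/μ₁(x) → 0` as `x → 1⁻`. -/
theorem boltzmann_bumpy :
    Tendsto muNW (nhdsWithin 1 (Set.Ioo (0 : ℝ) 1)) atTop ∧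
    Tendsto (fun x => sigmaNW x / muNW x) (nhdsWithin 1 (Set.Ioo (0 : ℝ) 1)) (nhds 0) := by
  have hmu_lb1 : ∀ x ∈ Set.Ioo (0:ℝ) 1, x / (1 - x) ≤ muNW x := by
    intro x hx
    obtain ⟨hx0, hx1⟩ := hx
    have hsum := summable_mu hx0 hx1
    have hnn : ∀ n : ℕ, 0 ≤ ((n + 1 : ℕ) : ℝ) * (Nat.totient (n + 1) : ℝ) * x ^ (n + 1)
        / (1 - x ^ (n + 1)) := by
      intro n
      have hxk1 : x ^ (n+1) < 1 := pow_lt_one₀ hx0.le hx1 (Nat.succ_ne_zero n)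
      apply div_nonneg _ (by linarith)
      positivity
    have h0 := Summable.le_tsum hsum 0 (fun n _ => hnn n)
    rw [muNW]
    refine le_trans (le_of_eq ?_) h0
    norm_num [Nat.totient_one]
  have hmuNW_lb : ∀ x : ℝ, 3/4 < x → x < 1 →
      1 / (64 * (1 - x) ^ 2 * Real.sqrt (1 - x)) ≤ muNW x := by
    intro x h34 hx1
    rw [muNW]
    exact mu_lb h34.le hx1
  have hmu_pos : ∀ x : ℝ, 3/4 < x → x < 1 → 0 < muNW x := by
    intro x h34 hx1
    have ht : (0:ℝ) < 1 - x := by linarith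
    have hst : (0:ℝ) < Real.sqrt (1 - x) := Real.sqrt_pos.mpr ht
    refine lt_of_lt_of_le ?_ (hmuNW_lb x h34 hx1)
    exact div_pos one_pos (mul_pos (mul_pos (by norm_num) (pow_pos ht 2)) hst)
  have hsigma_ub : ∀ x : ℝ, 0 < x → x < 1 → sigmaNW x ≤ 9 / (1 - x) ^ 2 := by
    intro x hx0 hx1
    have ht : (0:ℝ) < 1 - x := by linarith
    rw [sigmaNW]
    have h1 := sigma_sq_le hx0 hx1
    calc Real.sqrt (∑' n : ℕ,
          ((n + 1 : ℕ) : ℝ) ^ 2 * (Nat.totient (n + 1) : ℝ) * x ^ (n + 1) / (1 - x ^ (n + 1)) ^ 2)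
        ≤ Real.sqrt (81 / (1 - x) ^ 4) := Real.sqrt_le_sqrt h1
      _ = 9 / (1 - x) ^ 2 := by
          rw [show (81:ℝ) / (1 - x) ^ 4 = (9 / (1 - x) ^ 2) ^ 2 by
            rw [div_pow, ← pow_mul]; norm_num]
          exact Real.sqrt_sq (by positivity)
  constructor
  · -- μ₁ → ∞
    have h1 : Tendsto (fun x : ℝ => 1 - x) (nhdsWithin 1 (Set.Ioo (0:ℝ) 1))
        (nhdsWithin 0 (Set.Ioi 0)) := by
      apply tendsto_nhdsWithin_of_tendsto_nhds_of_eventually_within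
      · have h : Tendsto (fun x : ℝ => 1 - x) (nhds 1) (nhds 0) := by
          have := (continuous_sub_left (1:ℝ)).tendsto 1
          simpa using this
        exact h.mono_left nhdsWithin_le_nhds
      · filter_upwards [self_mem_nhdsWithin] with x hx
        exact sub_pos.mpr hx.2
    have h2 : Tendsto (fun x : ℝ => (1 - x)⁻¹) (nhdsWithin 1 (Set.Ioo (0:ℝ) 1)) atTop :=
      tendsto_inv_nhdsGT_zero.comp h1
    have h3 : Tendsto (fun x : ℝ => x) (nhdsWithin 1 (Set.Ioo (0:ℝ) 1)) (nhds 1) :=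
      tendsto_id.mono_left nhdsWithin_le_nhds
    have h4 : Tendsto (fun x : ℝ => x * (1 - x)⁻¹) (nhdsWithin 1 (Set.Ioo (0:ℝ) 1)) atTop :=
      h3.pos_mul_atTop zero_lt_one h2
    apply tendsto_atTop_mono' _ _ h4
    filter_upwards [eventually_mem_nhdsWithin] with x hx
    calc x * (1 - x)⁻¹ = x / (1 - x) := (div_eq_mul_inv x _).symm
      _ ≤ muNW x := hmu_lb1 x hx
  · -- σ/μ₁ → 0
    have hev : ∀ᶠ x : ℝ in nhdsWithin 1 (Set.Ioo (0:ℝ) 1), 3/4 < x :=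
      (eventually_gt_nhds (show (3/4:ℝ) < 1 by norm_num)).filter_mono nhdsWithin_le_nhds
    apply squeeze_zero' (g := fun x : ℝ => 576 * Real.sqrt (1 - x))
    · filter_upwards [eventually_mem_nhdsWithin, hev] with x hx h34
      exact div_nonneg (Real.sqrt_nonneg _) (hmu_pos x h34 hx.2).le
    · filter_upwards [eventually_mem_nhdsWithin, hev] with x hx h34
      have hx1 : x < 1 := hx.2
      have hx0 : (0:ℝ) < x := hx.1
      have ht : (0:ℝ) < 1 - x := by linarith
      have hst : (0:ℝ) < Real.sqrt (1 - x) := Real.sqrt_pos.mpr ht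
      have hden : (0:ℝ) < 64 * (1 - x) ^ 2 * Real.sqrt (1 - x) :=
        mul_pos (mul_pos (by norm_num) (pow_pos ht 2)) hst
      have hb1 : sigmaNW x / muNW x
          ≤ (9 / (1 - x) ^ 2) / (1 / (64 * (1 - x) ^ 2 * Real.sqrt (1 - x))) := by
        apply div_le_div₀ (by positivity) (hsigma_ub x hx0 hx1) (one_div_pos.mpr hden)
          (hmuNW_lb x h34 hx1)
      have hb2 : (9 / (1 - x) ^ 2) / (1 / (64 * (1 - x) ^ 2 * Real.sqrt (1 - x)))
          = 576 * Real.sqrt (1 - x) := by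
        rw [div_div_eq_mul_div, div_one, div_mul_eq_mul_div]
        rw [eq_comm, eq_div_iff (ne_of_gt (pow_pos ht 2))]
        have hts : Real.sqrt (1-x) * Real.sqrt (1-x) = 1 - x := Real.mul_self_sqrt ht.le
        ring_nf
      exact hb1.trans_eq hb2
    · have h : Tendsto (fun x : ℝ => 576 * Real.sqrt (1 - x)) (nhds 1) (nhds 0) := by
        have hc : Continuous fun x : ℝ => 576 * Real.sqrt (1 - x) :=
          continuous_const.mul (Real.continuous_sqrt.comp (continuous_const.sub continuous_id))
        have := hc.tendsto (1:ℝ)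
        simpa using this
      exact h.mono_left nhdsWithin_le_nhds
end

section
/- For every real t > 0 and every real u, |S(e^{−t+2πiu})| ≤ S(e^{−t}) · exp( −(ln 5 / 2) · ∑_{k≥1} φ(k) · e^{−kt} · sin²(π u k) ), where S(z) = ∏_{k=1}^∞ (1 − zᵏ)^{−φ(k)} is extended to complex z with |z| < 1. -/
open Real Complex

lemma exp_le_one_add' (y : ℝ) (h0 : 0 ≤ y) (h4 : y ≤ 4) :
    Real.exp ((Real.log 5 / 4) * y) ≤ 1 + y := by
  have hcc := strictConcaveOn_log_Ioi.concaveOn.2 (Set.mem_Ioi.mpr one_pos)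
    (Set.mem_Ioi.mpr (by norm_num : (0:ℝ) < 5))
    (by linarith : (0:ℝ) ≤ 1 - y/4) (by linarith : (0:ℝ) ≤ y/4) (by ring)
  simp only [smul_eq_mul, Real.log_one, mul_zero, mul_one, zero_add] at hcc
  have h15 : 1 - y/4 + y/4 * 5 = 1 + y := by ring
  rw [h15] at hcc
  calc Real.exp ((Real.log 5 / 4) * y) = Real.exp ((y/4) * Real.log 5) := by ring_nf
    _ ≤ Real.exp (Real.log (1 + y)) := Real.exp_le_exp.mpr hcc
    _ = 1 + y := Real.exp_log (by linarith)

lemma key_log' (r s b : ℝ) (hr0 : 0 < r) (hr1 : r < 1) (hs0 : 0 ≤ s) (hs1 : s ≤ 1)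
    (hb : 0 ≤ b) (hb2 : b ^ 2 = (1 - r) ^ 2 + 4 * (r * s)) :
    Real.log (1 - r) + (Real.log 5 / 2) * (r * s) ≤ Real.log b := by
  set c := (1 - r) * Real.exp ((Real.log 5 / 2) * (r * s)) with hc
  have hc0 : 0 < c := mul_pos (by linarith) (Real.exp_pos _)
  have hcb : c ≤ b := by
    have hexp2 : Real.exp ((Real.log 5 / 2) * (r * s)) ^ 2
        = Real.exp ((Real.log 5 / 4) * (4 * (r * s))) := by
      rw [pow_two, ← Real.exp_add]; ring_nf
    have h1 : c ^ 2 = (1-r)^2 * Real.exp ((Real.log 5 / 4) * (4 * (r * s))) := by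
      rw [hc, mul_pow, hexp2]
    have hrs0 : 0 ≤ r * s := mul_nonneg hr0.le hs0
    have hbound := exp_le_one_add' (4 * (r * s)) (by linarith) (by nlinarith)
    have hcsq : c ^ 2 ≤ b ^ 2 := by
      rw [h1, hb2]
      have h2 := mul_le_mul_of_nonneg_left hbound (sq_nonneg (1 - r))
      nlinarith [mul_nonneg (mul_nonneg hrs0 hr0.le) (by linarith : (0:ℝ) ≤ 2 - r)]
    nlinarith
  calc Real.log (1 - r) + (Real.log 5 / 2) * (r * s)
      = Real.log c := by rw [hc, Real.log_mul (by linarith) (Real.exp_ne_zero _), Real.log_exp]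
    _ ≤ Real.log b := Real.log_le_log hc0 hcb

lemma abs_sq_eq' (t u : ℝ) (k : ℕ) :
    ‖1 - (Complex.exp (-(t : ℂ) + 2 * Real.pi * Complex.I * u)) ^ (k+1)‖ ^ 2
      = (1 - Real.exp (-t) ^ (k+1)) ^ 2
        + 4 * (Real.exp (-t) ^ (k+1) * Real.sin (Real.pi * u * ((k:ℝ)+1)) ^ 2) := by
  have hzn : (Complex.exp (-(t : ℂ) + 2 * Real.pi * Complex.I * u)) ^ (k+1)
      = Complex.exp (((k+1 : ℕ) : ℂ) * (-(t : ℂ) + 2 * Real.pi * Complex.I * u)) := by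
    rw [Complex.exp_nat_mul]
  set c : ℂ := ((k+1 : ℕ) : ℂ) * (-(t : ℂ) + 2 * Real.pi * Complex.I * u) with hcdef
  have hre : c.re = ((k:ℝ)+1) * (-t) := by
    simp [hcdef, Complex.mul_re, Complex.mul_im]
  have him : c.im = 2 * (Real.pi * u * ((k:ℝ)+1)) := by
    simp [hcdef, Complex.mul_re, Complex.mul_im]
    ring
  have he : Real.exp c.re = Real.exp (-t) ^ (k+1) := by
    rw [hre, ← Real.exp_nat_mul]
    norm_num
  rw [hzn, Complex.sq_norm, Complex.normSq_apply]
  simp only [Complex.sub_re, Complex.sub_im, Complex.one_re, Complex.one_im,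
    Complex.exp_re, Complex.exp_im, he, him]
  have hc2 : Real.cos (2 * (Real.pi * u * ((k:ℝ)+1)))
      = Real.cos (Real.pi * u * ((k:ℝ)+1)) ^ 2 - Real.sin (Real.pi * u * ((k:ℝ)+1)) ^ 2 :=
    Real.cos_two_mul' _
  have hs2 := Real.sin_sq_add_cos_sq (Real.pi * u * ((k:ℝ)+1))
  have hs2' := Real.sin_sq_add_cos_sq (2 * (Real.pi * u * ((k:ℝ)+1)))
  linear_combination (rexp (-t) ^ (k+1))^2 * hs2' + (-2 * rexp (-t) ^ (k+1)) * hc2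
    + (-2 * rexp (-t) ^ (k+1)) * hs2


/-- The generating function of NW-convex paths `S(z) = ∏_{k≥1} (1 - zᵏ)^{-φ(k)}`,
for complex `z` with `|z| < 1`. -/
noncomputable def SNWc (z : ℂ) : ℂ :=
  ∏' k : ℕ, ((1 - z ^ (k + 1)) ^ Nat.totient (k + 1))⁻¹

/-- The generating function of NW-convex paths `S(x) = ∏_{k≥1} (1 - xᵏ)^{-φ(k)}`,
for real `0 ≤ x < 1`. -/
noncomputable def SNWr (x : ℝ) : ℝ :=
  ∏' k : ℕ, ((1 - x ^ (k + 1)) ^ Nat.totient (k + 1))⁻¹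

/-- The modulus bound on the circle of radius `e^{-t}`:
`|S(e^{-t+2πiu})| ≤ S(e^{-t}) exp(-(ln 5/2) ∑_{k≥1} φ(k) e^{-kt} sin²(π u k))`. -/
theorem S_modulus_bound (t : ℝ) (ht : 0 < t) (u : ℝ) :
    ‖SNWc (Complex.exp (-(t : ℂ) + 2 * Real.pi * Complex.I * u))‖ ≤
      SNWr (Real.exp (-t)) *
        Real.exp (-(Real.log 5 / 2) *
          ∑' k : ℕ, (Nat.totient (k + 1) : ℝ) * Real.exp (-((k + 1 : ℕ) : ℝ) * t) *
            Real.sin (Real.pi * u * ((k + 1 : ℕ) : ℝ)) ^ 2) := by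
  set x : ℝ := Real.exp (-t) with hxdef
  set z : ℂ := Complex.exp (-(t : ℂ) + 2 * Real.pi * Complex.I * u) with hzdef
  have hx0 : 0 < x := Real.exp_pos _
  have hx1 : x < 1 := Real.exp_lt_one_iff.mpr (by linarith)
  have hxn0 : ∀ k : ℕ, 0 < x ^ (k+1) := fun k => pow_pos hx0 _
  have hxn1 : ∀ k : ℕ, x ^ (k+1) < 1 := fun k => pow_lt_one₀ hx0.le hx1 k.succ_ne_zero
  have hxnle : ∀ k : ℕ, x ^ (k+1) ≤ x := fun k =>
    pow_le_of_le_one hx0.le hx1.le k.succ_ne_zero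
  have habsz : ‖z‖ = x := by
    rw [hzdef, Complex.norm_exp]
    congr 1
    simp
  have habszn : ∀ k : ℕ, ‖z ^ (k+1)‖ = x ^ (k+1) := fun k => by
    rw [norm_pow, habsz]
  have hne : ∀ k : ℕ, 1 - z ^ (k+1) ≠ 0 := by
    intro k h
    rw [sub_eq_zero] at h
    have h2 := habszn k
    rw [← h, norm_one] at h2
    have h3 := hxn1 k
    rw [← h2] at h3
    exact lt_irrefl 1 h3
  -- the sequences
  set φr : ℕ → ℝ := fun k => (Nat.totient (k+1) : ℝ) with hφdef
  have hφ0 : ∀ k, 0 ≤ φr k := fun k => Nat.cast_nonneg _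
  have hφle : ∀ k, φr k ≤ (k:ℝ) + 1 := fun k => by
    have h := Nat.totient_le (k+1)
    show (Nat.totient (k+1) : ℝ) ≤ (k:ℝ) + 1
    exact_mod_cast h
  set sq : ℕ → ℝ := fun k => Real.sin (Real.pi * u * ((k:ℝ)+1)) ^ 2 with hsqdef
  have hsq0 : ∀ k, 0 ≤ sq k := fun k => _root_.sq_nonneg _
  have hsq1 : ∀ k, sq k ≤ 1 := fun k => Real.sin_sq_le_one _
  set gC : ℕ → ℂ := fun k => -((Nat.totient (k+1) : ℂ) * Complex.log (1 - z ^ (k+1)))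
    with hgCdef
  set gR : ℕ → ℝ := fun k => -(φr k * Real.log (1 - x ^ (k+1))) with hgRdef
  -- base summable sequence
  have hM : Summable (fun k : ℕ => ((k:ℝ)+1) * x ^ (k+1)) := by
    have h := summable_pow_mul_geometric_of_norm_lt_one (R := ℝ) 1
      (by rwa [Real.norm_eq_abs, abs_of_pos hx0])
    have h2 := h.comp_injective (add_left_injective 1)
    refine h2.congr fun k => ?_
    simp only [Function.comp_apply]
    push_cast
    ring
  -- norm bound for complex logs
  set Cx : ℝ := x * (1-x)⁻¹ / 2 + 1 with hCxdef
  have hCx0 : 0 ≤ Cx := by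
    have : 0 < (1-x)⁻¹ := inv_pos.mpr (by linarith)
    positivity
  have hinvk : ∀ k : ℕ, (1 - x ^ (k+1))⁻¹ ≤ (1-x)⁻¹ := by
    intro k
    apply inv_anti₀ (by linarith)
    linarith [hxnle k]
  have hlogbound : ∀ k : ℕ, ‖Complex.log (1 - z ^ (k+1))‖ ≤ Cx * (x ^ (k+1)) := by
    intro k
    have hnorm : ‖-(z ^ (k+1))‖ = x ^ (k+1) := by
      rw [norm_neg, habszn]
    have h := Complex.norm_log_one_add_le (z := -(z ^ (k+1))) (by rw [hnorm]; exact hxn1 k)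
    rw [hnorm] at h
    have heq : (1 : ℂ) + -(z ^ (k+1)) = 1 - z ^ (k+1) := by ring
    rw [heq] at h
    refine h.trans ?_
    have h1 : (x ^ (k+1)) ^ 2 ≤ x ^ (k+1) * x := by
      rw [pow_two]
      exact mul_le_mul_of_nonneg_left (hxnle k) (hxn0 k).le
    have hmain : (x ^ (k+1)) ^ 2 * (1 - x ^ (k+1))⁻¹ ≤ (x ^ (k+1) * x) * (1-x)⁻¹ :=
      mul_le_mul h1 (hinvk k) (inv_pos.mpr (by linarith [hxn1 k])).le (by positivity)
    have : Cx * x ^ (k+1) = (x ^ (k+1) * x) * (1-x)⁻¹ / 2 + x ^ (k+1) := by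
      rw [hCxdef]; ring
    rw [this]
    linarith
  have hgCbound : ∀ k : ℕ, ‖gC k‖ ≤ Cx * (((k:ℝ)+1) * x ^ (k+1)) := by
    intro k
    rw [hgCdef]
    simp only [norm_neg, norm_mul, Complex.norm_natCast]
    calc (Nat.totient (k+1) : ℝ) * ‖Complex.log (1 - z ^ (k+1))‖
        ≤ ((k:ℝ)+1) * (Cx * x ^ (k+1)) :=
          mul_le_mul (hφle k) (hlogbound k) (norm_nonneg _) (by positivity)
      _ = Cx * (((k:ℝ)+1) * x ^ (k+1)) := by ring
  have hsumgC : Summable gC :=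
    Summable.of_norm_bounded (hM.mul_left Cx) hgCbound
  have hgCre : ∀ k : ℕ, (gC k).re = -(φr k * Real.log ‖1 - z ^ (k+1)‖) := by
    intro k
    rw [hgCdef]
    simp [Complex.mul_re, Complex.log_re, hφdef]
  have hsumRe : Summable (fun k => (gC k).re) := by
    refine Summable.of_norm_bounded (hM.mul_left Cx) fun k => ?_
    rw [Real.norm_eq_abs]
    exact (Complex.abs_re_le_norm _).trans (hgCbound k)
  have hsumgR : Summable gR := by
    refine Summable.of_norm_bounded (hM.mul_left (1-x)⁻¹) fun k => ?_
    rw [hgRdef, Real.norm_eq_abs, abs_neg, abs_mul, _root_.abs_of_nonneg (hφ0 k)]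
    have h1r : 0 < 1 - x ^ (k+1) := by linarith [hxn1 k]
    have hlogneg : Real.log (1 - x ^ (k+1)) ≤ 0 :=
      Real.log_nonpos (by linarith) (by linarith [hxn0 k])
    rw [abs_of_nonpos hlogneg, ← Real.log_inv]
    have h2 : Real.log (1 - x ^ (k+1))⁻¹ ≤ (1 - x ^ (k+1))⁻¹ - 1 :=
      Real.log_le_sub_one_of_pos (inv_pos.mpr h1r)
    have h3 : (1 - x ^ (k+1))⁻¹ - 1 ≤ x ^ (k+1) * (1-x)⁻¹ := by
      have heq : (1 - x ^ (k+1))⁻¹ - 1 = x ^ (k+1) * (1 - x ^ (k+1))⁻¹ := by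
        field_simp
        ring
      rw [heq]
      exact mul_le_mul_of_nonneg_left (hinvk k) (hxn0 k).le
    calc φr k * Real.log (1 - x ^ (k+1))⁻¹
        ≤ ((k:ℝ)+1) * (x ^ (k+1) * (1-x)⁻¹) := by
          apply mul_le_mul (hφle k) (h2.trans h3) ?_ (by positivity)
          apply Real.log_nonneg
          exact (one_le_inv₀ h1r).2 (by linarith [hxn0 k])
      _ = (1-x)⁻¹ * (((k:ℝ)+1) * x ^ (k+1)) := by ring
  have hsumS : Summable (fun k => φr k * x ^ (k+1) * sq k) := by
    refine Summable.of_nonneg_of_le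
      (fun k => by positivity)
      (fun k => ?_) hM
    calc φr k * x ^ (k+1) * sq k ≤ φr k * x ^ (k+1) * 1 := by
          apply mul_le_mul_of_nonneg_left (hsq1 k) (by positivity)
      _ ≤ ((k:ℝ)+1) * x ^ (k+1) := by
          rw [mul_one]
          exact mul_le_mul_of_nonneg_right (hφle k) (hxn0 k).le
  -- the complex product
  have hfunC : (cexp ∘ gC) = fun k => ((1 - z ^ (k+1)) ^ Nat.totient (k+1))⁻¹ := by
    funext k
    simp only [Function.comp_apply, hgCdef]
    rw [Complex.exp_neg, Complex.exp_nat_mul, Complex.exp_log (hne k)]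
  have hprodC : HasProd (fun k : ℕ => ((1 - z ^ (k+1)) ^ Nat.totient (k+1))⁻¹)
      (Complex.exp (∑' k, gC k)) := by
    have h := hsumgC.hasSum.cexp
    rwa [hfunC] at h
  have hSNWc : SNWc z = Complex.exp (∑' k, gC k) := hprodC.tprod_eq
  -- the real product
  have hfunR : (rexp ∘ gR) = fun k => ((1 - x ^ (k+1)) ^ Nat.totient (k+1))⁻¹ := by
    funext k
    simp only [Function.comp_apply, hgRdef, hφdef]
    rw [Real.exp_neg, Real.exp_nat_mul, Real.exp_log (by linarith [hxn1 k])]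
  have hprodR : HasProd (fun k : ℕ => ((1 - x ^ (k+1)) ^ Nat.totient (k+1))⁻¹)
      (Real.exp (∑' k, gR k)) := by
    have h := hsumgR.hasSum.rexp
    rwa [hfunR] at h
  have hSNWr : SNWr x = Real.exp (∑' k, gR k) := hprodR.tprod_eq
  -- rewrite the statement's tsum
  have hT : (∑' k : ℕ, (Nat.totient (k + 1) : ℝ) * Real.exp (-((k + 1 : ℕ) : ℝ) * t) *
      Real.sin (Real.pi * u * ((k + 1 : ℕ) : ℝ)) ^ 2) = ∑' k, φr k * x ^ (k+1) * sq k := by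
    refine tsum_congr fun k => ?_
    have he : Real.exp (-((k + 1 : ℕ) : ℝ) * t) = x ^ (k+1) := by
      rw [hxdef, ← Real.exp_nat_mul]
      congr 1
      push_cast
      ring
    rw [he, hφdef, hsqdef]
    push_cast
    ring
  -- put everything together
  rw [hSNWc, hSNWr, hT, Complex.norm_exp, Complex.re_tsum hsumgC, ← Real.exp_add]
  rw [Real.exp_le_exp]
  rw [← tsum_mul_left, ← Summable.tsum_add hsumgR (hsumS.mul_left (-(Real.log 5 / 2)))]
  refine Summable.tsum_le_tsum (fun k => ?_) hsumRe (hsumgR.add (hsumS.mul_left _))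
  rw [hgCre k, hgRdef]
  have hkey := key_log' (x ^ (k+1)) (sq k) (‖1 - z ^ (k+1)‖) (hxn0 k) (hxn1 k)
    (hsq0 k) (hsq1 k) (norm_nonneg _) (by rw [abs_sq_eq' t u k])
  have h2 := mul_le_mul_of_nonneg_left hkey (hφ0 k)
  nlinarith [h2]
end
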